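/- arXiv:1802.03536 — 3 statements merged into one kernel-verified Lean document; each statement's English description precedes it below -/
import Mathlib

section
/- Anticommutation relation of the super-Virasoro operators (eq. (3.12), third relation): for all integers m, n ≥ −1, the operators on A satisfy G_{m+1/2} ∘ G_{n+1/2} + G_{n+1/2} ∘ G_{m+1/2} = 2 L_{m+n+1} (note m+n+1 ≥ −1, so the right-hand side is always defined). -/
/-!
We work on the free supercommutative ℝ-algebra
`A = ℝ[g₀,g₁,…] ⊗ Λ(ξ_{1/2}, ξ_{3/2}, …)`, realized in Lean as
`MvPolynomial ℕ ℝ ⊗[ℝ] ExteriorAlgebra ℝ (ℕ →₀ ℝ)`; the even generator `g_k` is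
`X k ⊗ 1` and the odd generator `ξ_{k+1/2}` is `1 ⊗ ι (single k 1)`.

* `dg i` is the even derivation `∂/∂g_i` (the formal partial derivative on the
  polynomial factor), and `dxi i` is the odd derivation `∂/∂ξ_{i+1/2}`
  (contraction with the `i`-th dual-basis functional on the exterior factor).
* `gmul k` and `ximul k` are left multiplication by `g_k` and by `ξ_{k+1/2}`.
* The super-Virasoro operators of the supereigenvalue model
  (eqs. (3.10)-(3.11) of the paper, with `v = (t_s/2N)²`) are indexed by the
  integers `n ≥ -1`; we reindex them by `m : ℕ` via `n = m - 1` (a bijection from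
  `ℕ` onto `{n : ℤ | n ≥ -1}`): `Lop T₂ v m` is `L_{m-1}` and `Gop T₂ v m` is
  `G_{(m-1)+1/2} = G_{m-1/2}`.  Concretely (with `n = m-1`):

  `L_n = T₂ ∂/∂g_{n+2} + Σ_{k≥1} k g_k ∂/∂g_{k+n} + (v/2) Σ_{j=0}^{n} ∂²/(∂g_j∂g_{n-j})`
  `      + Σ_{k≥0, k+n≥0} (k+(n+1)/2) ξ_{k+1/2} ∂/∂ξ_{n+k+1/2}`
  `      + (v/2) Σ_{j=0}^{n-1} ((n-1)/2 - j) ∂²/(∂ξ_{j+1/2}∂ξ_{n-j-1/2})`,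

  `G_{n+1/2} = T₂ ∂/∂ξ_{n+5/2} + Σ_{k≥1} k g_k ∂/∂ξ_{n+k+1/2}`
  `      + Σ_{k≥0} ξ_{k+1/2} ∂/∂g_{k+n+1} + v Σ_{j=0}^{n} (∂/∂ξ_{j+1/2})(∂/∂g_{n-j})`.

  The infinite sums over `k` are taken pointwise via `finsum` (on each element of
  `A` only finitely many summands act nontrivially); a `k = 0` summand whose
  stated range is `k ≥ 1` carries the coefficient `0`, so including it is
  harmless.  Sums `Σ_{j=0}^{n}` and `Σ_{j=0}^{n-1}` are `Finset.range m` and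
  `Finset.range (m-1)` respectively (empty when the upper limit is negative).
-/

open scoped TensorProduct

set_option synthInstance.maxHeartbeats 1000000
set_option maxHeartbeats 1000000

/-- The free supercommutative algebra `ℝ[g₀,g₁,…] ⊗ Λ(ξ_{1/2},ξ_{3/2},…)`. -/
abbrev SEA : Type := MvPolynomial ℕ ℝ ⊗[ℝ] ExteriorAlgebra ℝ (ℕ →₀ ℝ)

/-- The even derivation `∂/∂g_i`. -/
noncomputable def dg (i : ℕ) : SEA →ₗ[ℝ] SEA :=
  TensorProduct.map (MvPolynomial.pderiv i).toLinearMap LinearMap.id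

/-- The odd derivation `∂/∂ξ_{i+1/2}`: contraction with the `i`-th dual-basis
functional on the exterior factor. -/
noncomputable def dxi (i : ℕ) : SEA →ₗ[ℝ] SEA :=
  TensorProduct.map LinearMap.id
    (CliffordAlgebra.contractLeft (Q := (0 : QuadraticForm ℝ (ℕ →₀ ℝ))) (Finsupp.lapply i))

/-- Left multiplication by `g_k`. -/
noncomputable def gmul (k : ℕ) : SEA →ₗ[ℝ] SEA :=
  LinearMap.mulLeft ℝ ((MvPolynomial.X k : MvPolynomial ℕ ℝ) ⊗ₜ[ℝ] (1 : ExteriorAlgebra ℝ (ℕ →₀ ℝ)))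

/-- Left multiplication by `ξ_{k+1/2}`. -/
noncomputable def ximul (k : ℕ) : SEA →ₗ[ℝ] SEA :=
  LinearMap.mulLeft ℝ ((1 : MvPolynomial ℕ ℝ) ⊗ₜ[ℝ] ExteriorAlgebra.ι ℝ (Finsupp.single k 1))

/-- The bosonic super-Virasoro operator `L_{m-1}` (eq. (3.10)). -/
noncomputable def Lop (T₂ v : ℝ) (m : ℕ) : SEA → SEA := fun a =>
  T₂ • dg (m + 1) a
  + (∑ᶠ k : ℕ, (k : ℝ) • gmul k (dg (m + k - 1) a))
  + (v / 2) • ∑ j ∈ Finset.range m, dg j (dg (m - 1 - j) a)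
  + (∑ᶠ k : ℕ, if m + k = 0 then 0 else ((k : ℝ) + (m : ℝ) / 2) • ximul k (dxi (m + k - 1) a))
  + (v / 2) • ∑ j ∈ Finset.range (m - 1),
      (((m : ℝ) - 2) / 2 - (j : ℝ)) • dxi j (dxi (m - j - 2) a)

/-- The fermionic super-Virasoro operator `G_{(m-1)+1/2}` (eq. (3.11)). -/
noncomputable def Gop (T₂ v : ℝ) (m : ℕ) : SEA → SEA := fun a =>
  T₂ • dxi (m + 1) a
  + (∑ᶠ k : ℕ, (k : ℝ) • gmul k (dxi (m + k - 1) a))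
  + (∑ᶠ k : ℕ, ximul k (dg (k + m) a))
  + v • ∑ j ∈ Finset.range m, dxi j (dg (m - 1 - j) a)

/-!
Statement 2 (eq. (3.12), third relation): for all integers `m', n' ≥ -1`,
`G_{m'+1/2} ∘ G_{n'+1/2} + G_{n'+1/2} ∘ G_{m'+1/2} = 2 L_{m'+n'+1}`.
With `m' = m - 1`, `n' = n - 1` (`m n : ℕ`), the right-hand index is
`m' + n' + 1 = (m + n) - 1 ≥ -1`, i.e. the operator `Lop T₂ v (m + n)`.
-/
/-! ### Basic commutation lemmas -/

open MvPolynomial in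
lemma pderiv_pderiv_comm (i j : ℕ) (p : MvPolynomial ℕ ℝ) :
    pderiv i (pderiv j p) = pderiv j (pderiv i p) := by
  induction p using MvPolynomial.induction_on with
  | C a => simp
  | add p q hp hq => simp [hp, hq]
  | mul_X p k hp =>
      rcases eq_or_ne k i with rfl | hki <;> rcases eq_or_ne k j with rfl | hkj <;>
        simp [pderiv_mul, hp, pderiv_X_self, pderiv_X_of_ne, *] <;> ring

lemma dg_dg (i j : ℕ) (a : SEA) : dg i (dg j a) = dg j (dg i a) := by
  induction a using TensorProduct.induction_on with
  | zero => simp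
  | tmul x y => simp [dg, pderiv_pderiv_comm]
  | add a b ha hb => simp [map_add, ha, hb]

lemma dxi_dxi (i j : ℕ) (a : SEA) : dxi i (dxi j a) = - dxi j (dxi i a) := by
  induction a using TensorProduct.induction_on with
  | zero => simp
  | tmul x y =>
      simp only [dxi, TensorProduct.map_tmul, LinearMap.id_coe, id_eq]
      rw [CliffordAlgebra.contractLeft_comm]
      simp [TensorProduct.tmul_neg]
  | add a b ha hb => simp only [map_add, ha, hb]; abel

lemma dg_dxi (i j : ℕ) (a : SEA) : dg i (dxi j a) = dxi j (dg i a) := by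
  induction a using TensorProduct.induction_on with
  | zero => simp
  | tmul x y => simp [dg, dxi]
  | add a b ha hb => simp [map_add, ha, hb]

lemma gmul_tmul (k : ℕ) (x : MvPolynomial ℕ ℝ) (y : ExteriorAlgebra ℝ (ℕ →₀ ℝ)) :
    gmul k (x ⊗ₜ[ℝ] y) = (MvPolynomial.X k * x) ⊗ₜ[ℝ] y := by
  simp [gmul, LinearMap.mulLeft_apply, Algebra.TensorProduct.tmul_mul_tmul]

lemma ximul_tmul (k : ℕ) (x : MvPolynomial ℕ ℝ) (y : ExteriorAlgebra ℝ (ℕ →₀ ℝ)) :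
    ximul k (x ⊗ₜ[ℝ] y) = x ⊗ₜ[ℝ] (ExteriorAlgebra.ι ℝ (Finsupp.single k 1) * y) := by
  simp [ximul, LinearMap.mulLeft_apply, Algebra.TensorProduct.tmul_mul_tmul]

lemma dg_gmul (i k : ℕ) (a : SEA) :
    dg i (gmul k a) = gmul k (dg i a) + (if i = k then a else 0) := by
  induction a using TensorProduct.induction_on with
  | zero => simp
  | tmul x y =>
      rw [gmul_tmul]
      rcases eq_or_ne i k with rfl | h
      · simp [dg, gmul_tmul, MvPolynomial.pderiv_mul, MvPolynomial.pderiv_X_self,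
          TensorProduct.add_tmul]
      · simp [dg, gmul_tmul, MvPolynomial.pderiv_mul, MvPolynomial.pderiv_X_of_ne (Ne.symm h), h]
  | add a b ha hb =>
      simp only [map_add, ha, hb]
      split_ifs <;> abel

lemma dxi_ximul (i k : ℕ) (a : SEA) :
    dxi i (ximul k a) = (if i = k then a else 0) - ximul k (dxi i a) := by
  induction a using TensorProduct.induction_on with
  | zero => simp
  | tmul x y =>
      rw [ximul_tmul]
      have : dxi i (x ⊗ₜ[ℝ] (ExteriorAlgebra.ι ℝ (Finsupp.single k 1) * y)) =
          x ⊗ₜ[ℝ] ((Finsupp.single k (1:ℝ)) i • y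
            - ExteriorAlgebra.ι ℝ (Finsupp.single k 1) * CliffordAlgebra.contractLeft
                (Q := (0 : QuadraticForm ℝ (ℕ →₀ ℝ))) (Finsupp.lapply i) y) := by
        simp [dxi, CliffordAlgebra.contractLeft_ι_mul]
      rw [this]
      rcases eq_or_ne i k with rfl | h
      · simp [Finsupp.single_apply, TensorProduct.tmul_sub, dxi, ximul_tmul]
      · simp [Finsupp.single_apply, (Ne.symm h), TensorProduct.tmul_sub, dxi, ximul_tmul, h,
          TensorProduct.tmul_neg, TensorProduct.neg_tmul]
  | add a b ha hb =>
      simp only [map_add, ha, hb]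
      split_ifs <;> abel

lemma dg_ximul (i k : ℕ) (a : SEA) : dg i (ximul k a) = ximul k (dg i a) := by
  induction a using TensorProduct.induction_on with
  | zero => simp
  | tmul x y => simp [dg, ximul_tmul]
  | add a b ha hb => simp [map_add, ha, hb]

lemma dxi_gmul (i k : ℕ) (a : SEA) : dxi i (gmul k a) = gmul k (dxi i a) := by
  induction a using TensorProduct.induction_on with
  | zero => simp
  | tmul x y => simp [dxi, gmul_tmul]
  | add a b ha hb => simp [map_add, ha, hb]

lemma gmul_gmul (k l : ℕ) (a : SEA) : gmul k (gmul l a) = gmul l (gmul k a) := by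
  induction a using TensorProduct.induction_on with
  | zero => simp
  | tmul x y => simp [gmul_tmul]; ring_nf
  | add a b ha hb => simp [map_add, ha, hb]

lemma gmul_ximul (k l : ℕ) (a : SEA) : gmul k (ximul l a) = ximul l (gmul k a) := by
  induction a using TensorProduct.induction_on with
  | zero => simp
  | tmul x y => simp [gmul_tmul, ximul_tmul]
  | add a b ha hb => simp [map_add, ha, hb]

lemma ximul_ximul (k l : ℕ) (a : SEA) : ximul k (ximul l a) = - ximul l (ximul k a) := by
  induction a using TensorProduct.induction_on with
  | zero => simp
  | tmul x y =>
      simp only [ximul_tmul]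
      rw [← mul_assoc, ← mul_assoc]
      have h := ExteriorAlgebra.ι_add_mul_swap (R := ℝ)
        (Finsupp.single k (1:ℝ)) (Finsupp.single l (1:ℝ))
      have : ExteriorAlgebra.ι ℝ (Finsupp.single k (1:ℝ)) *
          ExteriorAlgebra.ι ℝ (Finsupp.single l (1:ℝ)) =
          -(ExteriorAlgebra.ι ℝ (Finsupp.single l (1:ℝ)) *
            ExteriorAlgebra.ι ℝ (Finsupp.single k (1:ℝ))) := eq_neg_of_add_eq_zero_left h
      rw [this]
      simp [TensorProduct.tmul_neg, neg_mul]
  | add a b ha hb => simp only [map_add, ha, hb]; abel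
/-! ### Support bounds -/

/-- `a` is annihilated by all `∂/∂g_i` and `∂/∂ξ_{i+1/2}` with `i ≥ N`. -/
def IsBnd (N : ℕ) (a : SEA) : Prop := ∀ i, N ≤ i → dg i a = 0 ∧ dxi i a = 0

lemma isBnd_mono {N N' : ℕ} {a : SEA} (h : IsBnd N a) (hNN : N ≤ N') : IsBnd N' a :=
  fun i hi => h i (hNN.trans hi)

lemma isBnd_zero (N : ℕ) : IsBnd N (0 : SEA) := fun i _ => by simp

lemma isBnd_add {N : ℕ} {a b : SEA} (ha : IsBnd N a) (hb : IsBnd N b) : IsBnd N (a + b) :=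
  fun i hi => by simp [map_add, (ha i hi).1, (ha i hi).2, (hb i hi).1, (hb i hi).2]

lemma isBnd_smul {N : ℕ} {a : SEA} (c : ℝ) (ha : IsBnd N a) : IsBnd N (c • a) :=
  fun i hi => by simp [map_smul, (ha i hi).1, (ha i hi).2]

lemma isBnd_sum {N : ℕ} {s : Finset ℕ} {f : ℕ → SEA} (h : ∀ k ∈ s, IsBnd N (f k)) :
    IsBnd N (∑ k ∈ s, f k) := by
  classical
  induction s using Finset.induction_on with
  | empty => simpa using isBnd_zero N
  | insert k s hk ih =>
      rw [Finset.sum_insert hk]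
      exact isBnd_add (h _ (Finset.mem_insert_self _ _))
        (ih fun k hks => h k (Finset.mem_insert_of_mem hks))

lemma isBnd_dg {N : ℕ} {a : SEA} (ha : IsBnd N a) (j : ℕ) : IsBnd N (dg j a) :=
  fun i hi => by
    constructor
    · rw [dg_dg]; simp [(ha i hi).1]
    · rw [← dg_dxi]; simp [(ha i hi).2]

lemma isBnd_dxi {N : ℕ} {a : SEA} (ha : IsBnd N a) (j : ℕ) : IsBnd N (dxi j a) :=
  fun i hi => by
    constructor
    · rw [dg_dxi]; simp [(ha i hi).1]
    · rw [dxi_dxi]; simp [(ha i hi).2]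

lemma isBnd_gmul {N : ℕ} {a : SEA} (ha : IsBnd N a) {k : ℕ} (hk : k < N) :
    IsBnd N (gmul k a) := fun i hi => by
  have hik : i ≠ k := by omega
  constructor
  · rw [dg_gmul]; simp [hik, (ha i hi).1]
  · rw [dxi_gmul]; simp [(ha i hi).2]

lemma isBnd_ximul {N : ℕ} {a : SEA} (ha : IsBnd N a) {k : ℕ} (hk : k < N) :
    IsBnd N (ximul k a) := fun i hi => by
  have hik : i ≠ k := by omega
  constructor
  · rw [dg_ximul]; simp [(ha i hi).1]
  · rw [dxi_ximul]; simp [hik, (ha i hi).2]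

lemma exists_ct_bnd (y : ExteriorAlgebra ℝ (ℕ →₀ ℝ)) :
    ∃ N, ∀ i, N ≤ i →
      CliffordAlgebra.contractLeft (Q := (0 : QuadraticForm ℝ (ℕ →₀ ℝ)))
        (Finsupp.lapply i) y = 0 := by
  induction y using CliffordAlgebra.left_induction with
  | algebraMap r => exact ⟨0, fun i _ => CliffordAlgebra.contractLeft_algebraMap _ _ _⟩
  | add x y hx hy =>
      obtain ⟨N₁, h₁⟩ := hx; obtain ⟨N₂, h₂⟩ := hy
      exact ⟨max N₁ N₂, fun i hi => by
        simp [map_add, h₁ i (le_trans (le_max_left _ _) hi),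
          h₂ i (le_trans (le_max_right _ _) hi)]⟩
  | ι_mul x v hx =>
      obtain ⟨N, hN⟩ := hx
      refine ⟨max N (v.support.sup id + 1), fun i hi => ?_⟩
      rw [CliffordAlgebra.contractLeft_ι_mul]
      have h1 : (Finsupp.lapply i : (ℕ →₀ ℝ) →ₗ[ℝ] ℝ) v = 0 := by
        have : i ∉ v.support := by
          intro hmem
          have := Finset.le_sup (f := id) hmem
          simp only [id] at this
          omega
        simpa [Finsupp.lapply_apply] using Finsupp.notMem_support_iff.mp this
      rw [h1, hN i (le_trans (le_max_left _ _) hi)]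
      simp

lemma exists_isBnd (a : SEA) : ∃ N, IsBnd N a := by
  induction a using TensorProduct.induction_on with
  | zero => exact ⟨0, isBnd_zero 0⟩
  | tmul x y =>
      obtain ⟨N₂, h₂⟩ := exists_ct_bnd y
      refine ⟨max (x.vars.sup id + 1) N₂, fun i hi => ?_⟩
      constructor
      · have : i ∉ x.vars := by
          intro hmem
          have := Finset.le_sup (f := id) hmem
          simp only [id] at this
          omega
        simp [dg, MvPolynomial.pderiv_eq_zero_of_notMem_vars this]
      · simp [dxi, h₂ i (le_trans (le_max_right _ _) hi)]
  | add a b ha hb =>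
      obtain ⟨N₁, h₁⟩ := ha; obtain ⟨N₂, h₂⟩ := hb
      exact ⟨max N₁ N₂, isBnd_add (isBnd_mono h₁ (le_max_left _ _))
        (isBnd_mono h₂ (le_max_right _ _))⟩
/-! ### Truncated components of the super-Virasoro operators -/

noncomputable def tA (T₂ : ℝ) (m : ℕ) (b : SEA) : SEA := T₂ • dxi (m+1) b

noncomputable def tB (M m : ℕ) (b : SEA) : SEA :=
  ∑ k ∈ Finset.range M, (k:ℝ) • gmul k (dxi (m + k - 1) b)

noncomputable def tC (M m : ℕ) (b : SEA) : SEA :=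
  ∑ k ∈ Finset.range M, ximul k (dg (k + m) b)

noncomputable def tD (v : ℝ) (m : ℕ) (b : SEA) : SEA :=
  v • ∑ j ∈ Finset.range m, dxi j (dg (m - 1 - j) b)

lemma tA_add (T₂ : ℝ) (m : ℕ) (b c : SEA) : tA T₂ m (b + c) = tA T₂ m b + tA T₂ m c := by
  simp [tA, map_add, smul_add]

lemma tB_add (M m : ℕ) (b c : SEA) : tB M m (b + c) = tB M m b + tB M m c := by
  simp [tB, map_add, smul_add, Finset.sum_add_distrib]

lemma tC_add (M m : ℕ) (b c : SEA) : tC M m (b + c) = tC M m b + tC M m c := by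
  simp [tC, map_add, Finset.sum_add_distrib]

lemma tD_add (v : ℝ) (m : ℕ) (b c : SEA) : tD v m (b + c) = tD v m b + tD v m c := by
  simp [tD, map_add, smul_add, Finset.sum_add_distrib]

lemma gop_expand (T₂ v : ℝ) (m : ℕ) {N : ℕ} {b : SEA} (hb : IsBnd N b) {M : ℕ}
    (hM : N + 2 ≤ M) :
    Gop T₂ v m b = tA T₂ m b + tB M m b + tC M m b + tD v m b := by
  have h1 : (∑ᶠ k : ℕ, (k:ℝ) • gmul k (dxi (m + k - 1) b)) = tB M m b := by
    apply finsum_eq_sum_of_support_subset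
    intro k hk
    simp only [Function.mem_support] at hk
    simp only [Finset.coe_range, Set.mem_Iio]
    by_contra hkM
    push_neg at hkM
    have : dxi (m + k - 1) b = 0 := (hb _ (by omega)).2
    simp [this] at hk
  have h2 : (∑ᶠ k : ℕ, ximul k (dg (k + m) b)) = tC M m b := by
    apply finsum_eq_sum_of_support_subset
    intro k hk
    simp only [Function.mem_support] at hk
    simp only [Finset.coe_range, Set.mem_Iio]
    by_contra hkM
    push_neg at hkM
    have : dg (k + m) b = 0 := (hb _ (by omega)).1
    simp [this] at hk
  rw [Gop, h1, h2, tA, tD]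

lemma lop_expand (T₂ v : ℝ) (m : ℕ) {N : ℕ} {b : SEA} (hb : IsBnd N b) {M : ℕ}
    (hM : N + 2 ≤ M) :
    Lop T₂ v m b = T₂ • dg (m+1) b
      + (∑ k ∈ Finset.range M, (k:ℝ) • gmul k (dg (m + k - 1) b))
      + (v / 2) • ∑ j ∈ Finset.range m, dg j (dg (m - 1 - j) b)
      + (∑ k ∈ Finset.range M,
          if m + k = 0 then 0 else ((k : ℝ) + (m : ℝ) / 2) • ximul k (dxi (m + k - 1) b))
      + (v / 2) • ∑ j ∈ Finset.range (m - 1),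
          (((m : ℝ) - 2) / 2 - (j : ℝ)) • dxi j (dxi (m - j - 2) b) := by
  have h1 : (∑ᶠ k : ℕ, (k:ℝ) • gmul k (dg (m + k - 1) b))
      = ∑ k ∈ Finset.range M, (k:ℝ) • gmul k (dg (m + k - 1) b) := by
    apply finsum_eq_sum_of_support_subset
    intro k hk
    simp only [Function.mem_support] at hk
    simp only [Finset.coe_range, Set.mem_Iio]
    by_contra hkM
    push_neg at hkM
    have : dg (m + k - 1) b = 0 := (hb _ (by omega)).1
    simp [this] at hk
  have h2 : (∑ᶠ k : ℕ, if m + k = 0 then 0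
        else ((k : ℝ) + (m : ℝ) / 2) • ximul k (dxi (m + k - 1) b))
      = ∑ k ∈ Finset.range M,
          if m + k = 0 then 0 else ((k : ℝ) + (m : ℝ) / 2) • ximul k (dxi (m + k - 1) b) := by
    apply finsum_eq_sum_of_support_subset
    intro k hk
    simp only [Function.mem_support] at hk
    simp only [Finset.coe_range, Set.mem_Iio]
    by_contra hkM
    push_neg at hkM
    have : dxi (m + k - 1) b = 0 := (hb _ (by omega)).2
    simp [this] at hk
  rw [Lop, h1, h2]

lemma isBnd_gop (T₂ v : ℝ) (m : ℕ) {N : ℕ} {b : SEA} (hb : IsBnd N b) :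
    IsBnd (N + 2) (Gop T₂ v m b) := by
  rw [gop_expand T₂ v m hb (le_refl (N + 2))]
  have hb' : IsBnd (N + 2) b := isBnd_mono hb (by omega)
  apply isBnd_add
  apply isBnd_add
  apply isBnd_add
  · exact isBnd_smul _ (isBnd_dxi hb' _)
  · exact isBnd_sum fun k hk =>
      isBnd_smul _ (isBnd_gmul (isBnd_dxi hb' _) (Finset.mem_range.mp hk))
  · exact isBnd_sum fun k hk => isBnd_ximul (isBnd_dg hb' _) (Finset.mem_range.mp hk)
  · exact isBnd_smul _ (isBnd_sum fun j _ => isBnd_dxi (isBnd_dg hb' _) _)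
/-! ### Block anticommutators -/

lemma blockAA (T₂ : ℝ) (m n : ℕ) (a : SEA) :
    tA T₂ m (tA T₂ n a) + tA T₂ n (tA T₂ m a) = 0 := by
  unfold tA
  rw [map_smul, map_smul, dxi_dxi (m+1) (n+1) a]
  simp [smul_neg]

lemma blockAB (T₂ : ℝ) (m n M : ℕ) (a : SEA) :
    tA T₂ m (tB M n a) + tB M n (tA T₂ m a) = 0 := by
  unfold tA tB
  rw [map_sum, Finset.smul_sum, ← Finset.sum_add_distrib]
  apply Finset.sum_eq_zero
  intro k _
  rw [map_smul, map_smul, dxi_gmul, dxi_dxi (n + k - 1) (m + 1) a]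
  simp only [map_neg, map_smul, smul_neg, smul_smul]
  module

lemma blockAC (T₂ : ℝ) (m n M : ℕ) (a : SEA) (hmM : m + 1 < M) :
    tA T₂ m (tC M n a) + tC M n (tA T₂ m a) = T₂ • dg (m + n + 1) a := by
  unfold tA tC
  rw [map_sum, Finset.smul_sum, ← Finset.sum_add_distrib]
  have key : ∀ k ∈ Finset.range M,
      T₂ • dxi (m + 1) (ximul k (dg (k + n) a)) + ximul k (dg (k + n) (T₂ • dxi (m + 1) a))
        = if m + 1 = k then T₂ • dg (k + n) a else 0 := by
    intro k _
    rw [map_smul, map_smul, dxi_ximul, ← dg_dxi]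
    rcases eq_or_ne (m+1) k with h | h
    · simp [h, smul_sub]
    · simp [h, smul_sub]
  rw [Finset.sum_congr rfl key, Finset.sum_ite_eq, if_pos (Finset.mem_range.mpr hmM),
    show m + 1 + n = m + n + 1 by omega]

lemma blockAD (T₂ v : ℝ) (m n : ℕ) (a : SEA) :
    tA T₂ m (tD v n a) + tD v n (tA T₂ m a) = 0 := by
  unfold tA tD
  simp only [map_smul, map_sum, Finset.smul_sum, smul_smul]
  rw [← Finset.sum_add_distrib]
  apply Finset.sum_eq_zero
  intro j _
  rw [dg_dxi (n - 1 - j) (m + 1) a, dxi_dxi j (m + 1) (dg (n - 1 - j) a)]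
  simp only [smul_neg]
  module
lemma blockBB (m n M : ℕ) (a : SEA) :
    tB M m (tB M n a) + tB M n (tB M m a) = 0 := by
  unfold tB
  simp only [map_sum, map_smul, Finset.smul_sum, smul_smul]
  rw [add_eq_zero_iff_eq_neg, ← Finset.sum_neg_distrib]
  simp only [← Finset.sum_neg_distrib]
  conv_rhs => rw [Finset.sum_comm]
  refine Finset.sum_congr rfl fun k _ => Finset.sum_congr rfl fun l _ => ?_
  rw [dxi_gmul, dxi_gmul, dxi_dxi (n + l - 1) (m + k - 1) a, gmul_gmul l k]
  simp only [map_neg, smul_neg, neg_neg]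
  rw [mul_comm]

lemma blockCC (m n M : ℕ) (a : SEA) :
    tC M m (tC M n a) + tC M n (tC M m a) = 0 := by
  unfold tC
  simp only [map_sum]
  rw [add_eq_zero_iff_eq_neg, ← Finset.sum_neg_distrib]
  simp only [← Finset.sum_neg_distrib]
  conv_rhs => rw [Finset.sum_comm]
  refine Finset.sum_congr rfl fun k _ => Finset.sum_congr rfl fun l _ => ?_
  rw [dg_ximul (k + m) l (dg (l + n) a), dg_ximul (l + n) k (dg (k + m) a),
    dg_dg (l + n) (k + m) a, ximul_ximul l k]
  simp only [neg_neg]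

lemma blockDD (v : ℝ) (m n : ℕ) (a : SEA) :
    tD v m (tD v n a) + tD v n (tD v m a) = 0 := by
  unfold tD
  simp only [map_sum, map_smul, Finset.smul_sum, smul_smul]
  rw [add_eq_zero_iff_eq_neg, ← Finset.sum_neg_distrib]
  simp only [← Finset.sum_neg_distrib]
  conv_rhs => rw [Finset.sum_comm]
  refine Finset.sum_congr rfl fun j _ => Finset.sum_congr rfl fun j' _ => ?_
  rw [dg_dxi (m - 1 - j) j' (dg (n - 1 - j') a), dg_dxi (n - 1 - j') j (dg (m - 1 - j) a),
    dg_dg (n - 1 - j') (m - 1 - j) a, dxi_dxi j' j (dg (m - 1 - j) (dg (n - 1 - j') a))]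
  simp only [smul_neg, neg_neg]
lemma blockCD (v : ℝ) (m n M : ℕ) (a : SEA) (hnM : n ≤ M) :
    tC M m (tD v n a) + tD v n (tC M m a)
      = v • ∑ j ∈ Finset.range n, dg (j + m) (dg (n - 1 - j) a) := by
  unfold tC tD
  simp only [map_sum, map_smul, Finset.smul_sum]
  rw [Finset.sum_comm]
  simp only [← Finset.sum_add_distrib]
  have key : ∀ j ∈ Finset.range n, ∀ k ∈ Finset.range M,
      v • ximul k (dg (k + m) (dxi j (dg (n - 1 - j) a)))
        + v • dxi j (dg (n - 1 - j) (ximul k (dg (k + m) a)))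
      = if j = k then v • dg (k + m) (dg (n - 1 - j) a) else 0 := by
    intro j _ k _
    rw [dg_dxi (k + m) j (dg (n - 1 - j) a), dg_ximul (n - 1 - j) k (dg (k + m) a),
      dg_dg (n - 1 - j) (k + m) a, dxi_ximul j k (dg (k + m) (dg (n - 1 - j) a))]
    rcases eq_or_ne j k with h | h
    · simp only [if_pos h, smul_sub]
      abel
    · simp only [if_neg h, zero_sub, smul_neg]
      abel
  rw [Finset.sum_congr rfl fun j hj => Finset.sum_congr rfl fun k hk => key j hj k hk]
  refine Finset.sum_congr rfl fun j hj => ?_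
  rw [Finset.sum_ite_eq, if_pos (Finset.mem_range.mpr (lt_of_lt_of_le (Finset.mem_range.mp hj) hnM)),
    dg_dg (j + m) (n - 1 - j) a]

lemma blockBD (v : ℝ) (m n M : ℕ) (a : SEA) (hnM : n ≤ M) :
    tB M m (tD v n a) + tD v n (tB M m a)
      = v • ∑ j ∈ Finset.range n, ((n - 1 - j : ℕ) : ℝ) • dxi j (dxi (m + n - 2 - j) a) := by
  unfold tB tD
  simp only [map_sum, map_smul, Finset.smul_sum, smul_smul]
  rw [Finset.sum_comm]
  simp only [← Finset.sum_add_distrib]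
  have key : ∀ j ∈ Finset.range n, ∀ k ∈ Finset.range M,
      ((k : ℝ) * v) • gmul k (dxi (m + k - 1) (dxi j (dg (n - 1 - j) a)))
        + (v * (k : ℝ)) • dxi j (dg (n - 1 - j) (gmul k (dxi (m + k - 1) a)))
      = if n - 1 - j = k then (v * (k : ℝ)) • dxi j (dxi (m + k - 1) a) else 0 := by
    intro j _ k _
    rw [dg_gmul (n - 1 - j) k (dxi (m + k - 1) a), (dxi j).map_add, apply_ite (dxi j),
      map_zero, dxi_gmul j k (dg (n - 1 - j) (dxi (m + k - 1) a)),
      dxi_dxi (m + k - 1) j (dg (n - 1 - j) a), ← dg_dxi (n - 1 - j) (m + k - 1) a]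
    simp only [map_neg, smul_neg, smul_add, mul_comm]
    split_ifs with h
    · abel
    · simp only [smul_zero, add_zero]
      abel
  rw [Finset.sum_congr rfl fun j hj => Finset.sum_congr rfl fun k hk => key j hj k hk]
  refine Finset.sum_congr rfl fun j hj => ?_
  have hjn : j < n := Finset.mem_range.mp hj
  rw [Finset.sum_ite_eq, if_pos (Finset.mem_range.mpr (lt_of_lt_of_le (by omega : n - 1 - j < n) hnM)),
    show m + (n - 1 - j) - 1 = m + n - 2 - j by omega]

lemma blockBC (m n M N : ℕ) (a : SEA) (hN : IsBnd N a) (hNM : N + 1 ≤ M) :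
    tB M m (tC M n a) + tC M n (tB M m a)
      = (∑ k ∈ Finset.range M, (k : ℝ) • gmul k (dg (m + n + k - 1) a))
        + ∑ l ∈ Finset.range M, ((l : ℝ) + (n : ℝ)) • ximul l (dxi (m + n + l - 1) a) := by
  unfold tB tC
  simp only [map_sum, map_smul, Finset.smul_sum]
  rw [Finset.sum_comm (s := Finset.range M) (t := Finset.range M)
    (f := fun l k => (k : ℝ) • ximul l (dg (l + n) (gmul k (dxi (m + k - 1) a))))]
  simp only [← Finset.sum_add_distrib]
  have key : ∀ k ∈ Finset.range M, ∀ l ∈ Finset.range M,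
      (k : ℝ) • gmul k (dxi (m + k - 1) (ximul l (dg (l + n) a)))
        + (k : ℝ) • ximul l (dg (l + n) (gmul k (dxi (m + k - 1) a)))
      = (if m + k - 1 = l then (k : ℝ) • gmul k (dg (l + n) a) else 0)
        + (if l + n = k then (k : ℝ) • ximul l (dxi (m + k - 1) a) else 0) := by
    intro k _ l _
    rw [dxi_ximul (m + k - 1) l (dg (l + n) a), dg_gmul (l + n) k (dxi (m + k - 1) a),
      ← dg_dxi (l + n) (m + k - 1) a, (ximul l).map_add, apply_ite (ximul l), map_zero,
      ← gmul_ximul k l (dg (l + n) (dxi (m + k - 1) a))]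
    simp only [map_sub, smul_sub, smul_add, apply_ite (gmul k), map_zero, smul_ite, smul_zero]
    split_ifs with h1 h2 <;> abel
  rw [Finset.sum_congr rfl fun k hk => Finset.sum_congr rfl fun l hl => key k hk l hl]
  simp only [Finset.sum_add_distrib]
  congr 1
  · refine Finset.sum_congr rfl fun k hk => ?_
    rw [Finset.sum_ite_eq]
    rcases Nat.eq_zero_or_pos k with rfl | hk1
    · simp
    rcases lt_or_ge (m + k - 1) M with h | h
    · rw [if_pos (Finset.mem_range.mpr h), show m + k - 1 + n = m + n + k - 1 by omega]
    · rw [if_neg (by simp [Finset.mem_range]; omega),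
        (hN (m + n + k - 1) (by omega)).1, map_zero, smul_zero]
  · rw [Finset.sum_comm]
    refine Finset.sum_congr rfl fun l _ => ?_
    rw [Finset.sum_ite_eq]
    rcases lt_or_ge (l + n) M with h | h
    · rw [if_pos (Finset.mem_range.mpr h), show m + (l + n) - 1 = m + n + l - 1 by omega]
      push_cast
      ring_nf
    · rw [if_neg (by simp [Finset.mem_range]; omega),
        (hN (m + n + l - 1) (by omega)).2, map_zero, smul_zero]
/-! ### The three recombination identities -/

lemma dgdg_sum (m n : ℕ) (a : SEA) :
    (∑ j ∈ Finset.range n, dg (j + m) (dg (n - 1 - j) a))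
      + ∑ j ∈ Finset.range m, dg (j + n) (dg (m - 1 - j) a)
    = ∑ j ∈ Finset.range (m + n), dg j (dg (m + n - 1 - j) a) := by
  rw [← Finset.sum_range_reflect (fun j => dg (j + n) (dg (m - 1 - j) a)) m]
  have h2 : ∀ j ∈ Finset.range m,
      dg (m - 1 - j + n) (dg (m - 1 - (m - 1 - j)) a) = dg j (dg (m + n - 1 - j) a) := by
    intro j hj
    have hjm := Finset.mem_range.mp hj
    rw [show m - 1 - (m - 1 - j) = j by omega, dg_dg,
      show m - 1 - j + n = m + n - 1 - j by omega]
  rw [Finset.sum_congr rfl h2]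
  have h1 : (∑ j ∈ Finset.range n, dg (j + m) (dg (n - 1 - j) a))
      = ∑ j ∈ Finset.Ico m (m + n), dg j (dg (m + n - 1 - j) a) := by
    rw [Finset.sum_Ico_eq_sum_range]
    simp only [Nat.add_sub_cancel_left]
    refine Finset.sum_congr rfl fun j hj => ?_
    have hjn := Finset.mem_range.mp hj
    rw [show j + m = m + j by omega, show m + n - 1 - (m + j) = n - 1 - j by omega]
  rw [h1, add_comm]
  simp only [Finset.range_eq_Ico]
  exact Finset.sum_Ico_consecutive _ (Nat.zero_le m) (Nat.le_add_right m n)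

lemma ximul_sum_eq (m n M : ℕ) (a : SEA) :
    (∑ l ∈ Finset.range M, ((l : ℝ) + (n : ℝ)) • ximul l (dxi (m + n + l - 1) a))
      + ∑ l ∈ Finset.range M, ((l : ℝ) + (m : ℝ)) • ximul l (dxi (m + n + l - 1) a)
    = (2 : ℝ) • ∑ k ∈ Finset.range M,
        (if m + n + k = 0 then 0
          else ((k : ℝ) + ((m + n : ℕ) : ℝ) / 2) • ximul k (dxi (m + n + k - 1) a)) := by
  rw [Finset.smul_sum, ← Finset.sum_add_distrib]
  refine Finset.sum_congr rfl fun k _ => ?_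
  split_ifs with h
  · obtain ⟨hm, hn, hk⟩ : m = 0 ∧ n = 0 ∧ k = 0 := by omega
    subst hm; subst hn; subst hk
    norm_num
  · rw [smul_smul, ← add_smul]
    congr 1
    push_cast
    ring

lemma coeff_ext (A B : ℕ) (c : ℕ → ℝ) (F : ℕ → SEA) (h : ∀ j, min A B ≤ j → c j = 0) :
    ∑ j ∈ Finset.range A, c j • F j = ∑ j ∈ Finset.range B, c j • F j := by
  rcases le_total A B with hab | hab
  · exact Finset.sum_subset (Finset.range_subset_range.mpr hab) fun j _ hjA => by
      rw [h j (le_trans (min_le_left A B)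
        (Nat.le_of_not_lt fun hlt => hjA (Finset.mem_range.mpr hlt))), zero_smul]
  · exact (Finset.sum_subset (Finset.range_subset_range.mpr hab) fun j _ hjB => by
      rw [h j (le_trans (min_le_right A B)
        (Nat.le_of_not_lt fun hlt => hjB (Finset.mem_range.mpr hlt))), zero_smul]).symm

lemma reflect_cancel (K : ℕ) (c : ℕ → ℝ) (F : ℕ → SEA)
    (hsym : ∀ j, j < K → c (K - 1 - j) • F (K - 1 - j) = -(c j • F j)) :
    ∑ j ∈ Finset.range K, c j • F j = 0 := by
  have hrefl : ∑ j ∈ Finset.range K, c j • F j = ∑ j ∈ Finset.range K, -(c j • F j) := by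
    conv_lhs => rw [← Finset.sum_range_reflect (fun j => c j • F j) K]
    exact Finset.sum_congr rfl fun j hj => hsym j (Finset.mem_range.mp hj)
  have h2 : (2 : ℝ) • ∑ j ∈ Finset.range K, c j • F j = 0 := by
    rw [two_smul]
    nth_rewrite 2 [hrefl]
    rw [Finset.sum_neg_distrib]
    exact add_neg_cancel _
  rcases smul_eq_zero.mp h2 with h | h
  · norm_num at h
  · exact h

lemma dxidxi_sum (v : ℝ) (m n : ℕ) (a : SEA) :
    (v • ∑ j ∈ Finset.range n, ((n - 1 - j : ℕ) : ℝ) • dxi j (dxi (m + n - 2 - j) a))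
      + v • ∑ j ∈ Finset.range m, ((m - 1 - j : ℕ) : ℝ) • dxi j (dxi (m + n - 2 - j) a)
    = (2 : ℝ) • (v / 2) • ∑ j ∈ Finset.range (m + n - 1),
        ((((m + n : ℕ) : ℝ) - 2) / 2 - (j : ℝ)) • dxi j (dxi (m + n - j - 2) a) := by
  rw [smul_smul (2 : ℝ) (v / 2), show (2 : ℝ) * (v / 2) = v by ring, ← smul_add]
  congr 1
  have e1 : (∑ j ∈ Finset.range n, ((n - 1 - j : ℕ) : ℝ) • dxi j (dxi (m + n - 2 - j) a))
      = ∑ j ∈ Finset.range (m + n - 1),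
          ((n - 1 - j : ℕ) : ℝ) • dxi j (dxi (m + n - 2 - j) a) := by
    refine coeff_ext n (m + n - 1) _ _ fun j hj => ?_
    rw [show n - 1 - j = 0 by omega]
    norm_num
  have e2 : (∑ j ∈ Finset.range m, ((m - 1 - j : ℕ) : ℝ) • dxi j (dxi (m + n - 2 - j) a))
      = ∑ j ∈ Finset.range (m + n - 1),
          ((m - 1 - j : ℕ) : ℝ) • dxi j (dxi (m + n - 2 - j) a) := by
    refine coeff_ext m (m + n - 1) _ _ fun j hj => ?_
    rw [show m - 1 - j = 0 by omega]
    norm_num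
  have e3 : (∑ j ∈ Finset.range (m + n - 1),
        ((((m + n : ℕ) : ℝ) - 2) / 2 - (j : ℝ)) • dxi j (dxi (m + n - j - 2) a))
      = ∑ j ∈ Finset.range (m + n - 1),
          ((((m + n : ℕ) : ℝ) - 2) / 2 - (j : ℝ)) • dxi j (dxi (m + n - 2 - j) a) := by
    refine Finset.sum_congr rfl fun j _ => ?_
    rw [show m + n - j - 2 = m + n - 2 - j by omega]
  rw [e1, e2, e3, ← Finset.sum_add_distrib]
  simp only [← add_smul]
  rw [← sub_eq_zero, ← Finset.sum_sub_distrib]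
  simp only [← sub_smul]
  refine reflect_cancel (m + n - 1) _ _ fun j hj => ?_
  rw [show m + n - 1 - 1 - j = m + n - 2 - j by omega,
    show m + n - 2 - (m + n - 2 - j) = j by omega,
    dxi_dxi (m + n - 2 - j) j a, smul_neg]
  congr 2
  have hnat : (n - 1 - (m + n - 2 - j)) + (m - 1 - (m + n - 2 - j)) + (m + n - 2 - j)
      = (n - 1 - j) + (m - 1 - j) + j := by omega
  have hc := congrArg (fun t : ℕ => (t : ℝ)) hnat
  push_cast at hc
  linarith
theorem superVirasoro_anticommutator (T₂ v : ℝ) (m n : ℕ) :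
    Gop T₂ v m ∘ Gop T₂ v n + Gop T₂ v n ∘ Gop T₂ v m = (2 : ℝ) • Lop T₂ v (m + n) := by
  funext a
  obtain ⟨N, hN⟩ := exists_isBnd a
  set M := N + m + n + 5 with hM
  have hBn : IsBnd (N + 2) (Gop T₂ v n a) := isBnd_gop T₂ v n hN
  have hBm : IsBnd (N + 2) (Gop T₂ v m a) := isBnd_gop T₂ v m hN
  simp only [Pi.add_apply, Function.comp_apply, Pi.smul_apply]
  rw [gop_expand T₂ v m hBn (show N + 2 + 2 ≤ M by omega),
      gop_expand T₂ v n hBm (show N + 2 + 2 ≤ M by omega),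
      gop_expand T₂ v n hN (show N + 2 ≤ M by omega),
      gop_expand T₂ v m hN (show N + 2 ≤ M by omega),
      lop_expand T₂ v (m + n) hN (show N + 2 ≤ M by omega)]
  simp only [tA_add, tB_add, tC_add, tD_add, smul_add]
  -- regroup the 32 terms into the 16 anticommutator blocks
  have regroup :
      tA T₂ m (tA T₂ n a) + tA T₂ m (tB M n a) + tA T₂ m (tC M n a) + tA T₂ m (tD v n a)
      + (tB M m (tA T₂ n a) + tB M m (tB M n a) + tB M m (tC M n a) + tB M m (tD v n a))
      + (tC M m (tA T₂ n a) + tC M m (tB M n a) + tC M m (tC M n a) + tC M m (tD v n a))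
      + (tD v m (tA T₂ n a) + tD v m (tB M n a) + tD v m (tC M n a) + tD v m (tD v n a))
      + (tA T₂ n (tA T₂ m a) + tA T₂ n (tB M m a) + tA T₂ n (tC M m a) + tA T₂ n (tD v m a)
      + (tB M n (tA T₂ m a) + tB M n (tB M m a) + tB M n (tC M m a) + tB M n (tD v m a))
      + (tC M n (tA T₂ m a) + tC M n (tB M m a) + tC M n (tC M m a) + tC M n (tD v m a))
      + (tD v n (tA T₂ m a) + tD v n (tB M m a) + tD v n (tC M m a) + tD v n (tD v m a)))
      =
      (tA T₂ m (tA T₂ n a) + tA T₂ n (tA T₂ m a))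
      + (tA T₂ m (tB M n a) + tB M n (tA T₂ m a))
      + (tA T₂ m (tC M n a) + tC M n (tA T₂ m a))
      + (tA T₂ m (tD v n a) + tD v n (tA T₂ m a))
      + (tA T₂ n (tB M m a) + tB M m (tA T₂ n a))
      + (tB M m (tB M n a) + tB M n (tB M m a))
      + (tB M m (tC M n a) + tC M n (tB M m a))
      + (tB M m (tD v n a) + tD v n (tB M m a))
      + (tA T₂ n (tC M m a) + tC M m (tA T₂ n a))
      + (tB M n (tC M m a) + tC M m (tB M n a))
      + (tC M m (tC M n a) + tC M n (tC M m a))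
      + (tC M m (tD v n a) + tD v n (tC M m a))
      + (tA T₂ n (tD v m a) + tD v m (tA T₂ n a))
      + (tB M n (tD v m a) + tD v m (tB M n a))
      + (tC M n (tD v m a) + tD v m (tC M n a))
      + (tD v m (tD v n a) + tD v n (tD v m a)) := by
    abel
  rw [regroup]
  -- block values
  have L3' := blockAC T₂ n m M a (show n + 1 < M by omega)
  have L6' := blockBC n m M N a hN (show N + 1 ≤ M by omega)
  have L7' := blockBD v n m M a (show m ≤ M by omega)
  rw [show n + m = m + n from Nat.add_comm n m] at L3' L6' L7'
  rw [blockAA T₂ m n a, blockAB T₂ m n M a, blockAC T₂ m n M a (show m + 1 < M by omega),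
    blockAD T₂ v m n a, blockAB T₂ n m M a, blockBB m n M a,
    blockBC m n M N a hN (show N + 1 ≤ M by omega), blockBD v m n M a (show n ≤ M by omega),
    L3', L6', blockCC m n M a, blockCD v m n M a (show n ≤ M by omega),
    blockAD T₂ v n m a, L7', blockCD v n m M a (show m ≤ M by omega), blockDD v m n a]
  simp only [add_zero, zero_add]
  -- now five families
  have hT : T₂ • dg (m + n + 1) a + T₂ • dg (m + n + 1) a
      = (2 : ℝ) • (T₂ • dg (m + n + 1) a) := by module
  have hG : (∑ k ∈ Finset.range M, (k : ℝ) • gmul k (dg (m + n + k - 1) a))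
      + (∑ k ∈ Finset.range M, (k : ℝ) • gmul k (dg (m + n + k - 1) a))
      = (2 : ℝ) • ∑ k ∈ Finset.range M, (k : ℝ) • gmul k (dg (m + n + k - 1) a) := by module
  have hXi := ximul_sum_eq m n M a
  have hdg : (v • ∑ j ∈ Finset.range n, dg (j + m) (dg (n - 1 - j) a))
      + v • ∑ j ∈ Finset.range m, dg (j + n) (dg (m - 1 - j) a)
      = (2 : ℝ) • (v / 2) • ∑ j ∈ Finset.range (m + n), dg j (dg (m + n - 1 - j) a) := by
    rw [smul_smul, show (2 : ℝ) * (v / 2) = v by ring, ← smul_add, dgdg_sum m n a]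
  have hxi := dxidxi_sum v m n a
  calc _ = (T₂ • dg (m + n + 1) a + T₂ • dg (m + n + 1) a)
        + ((∑ k ∈ Finset.range M, (k : ℝ) • gmul k (dg (m + n + k - 1) a))
            + ∑ k ∈ Finset.range M, (k : ℝ) • gmul k (dg (m + n + k - 1) a))
        + ((∑ l ∈ Finset.range M, ((l : ℝ) + (n : ℝ)) • ximul l (dxi (m + n + l - 1) a))
            + ∑ l ∈ Finset.range M, ((l : ℝ) + (m : ℝ)) • ximul l (dxi (m + n + l - 1) a))
        + ((v • ∑ j ∈ Finset.range n, dg (j + m) (dg (n - 1 - j) a))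
            + v • ∑ j ∈ Finset.range m, dg (j + n) (dg (m - 1 - j) a))
        + ((v • ∑ j ∈ Finset.range n, ((n - 1 - j : ℕ) : ℝ) • dxi j (dxi (m + n - 2 - j) a))
            + v • ∑ j ∈ Finset.range m, ((m - 1 - j : ℕ) : ℝ) • dxi j (dxi (m + n - 2 - j) a)) := by
          abel
    _ = _ := by
          rw [hT, hG, hXi, hdg, hxi]
          abel
end

section
/- The fermionic super-Virasoro constraints imply the bosonic ones: if an element 𝒵 ∈ A satisfies G_{n+1/2} 𝒵 = 0 for every integer n ≥ −1, then L_n 𝒵 = 0 for every integer n ≥ −1. -/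
/-!
We work on the free supercommutative ℝ-algebra
`A = ℝ[g₀,g₁,…] ⊗ Λ(ξ_{1/2}, ξ_{3/2}, …)`, realized in Lean as
`MvPolynomial ℕ ℝ ⊗[ℝ] ExteriorAlgebra ℝ (ℕ →₀ ℝ)`; the even generator `g_k` is
`X k ⊗ 1` and the odd generator `ξ_{k+1/2}` is `1 ⊗ ι (single k 1)`.

* `dg i` is the even derivation `∂/∂g_i` (the formal partial derivative on the
  polynomial factor), and `dxi i` is the odd derivation `∂/∂ξ_{i+1/2}`
  (contraction with the `i`-th dual-basis functional on the exterior factor).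
* `gmul k` and `ximul k` are left multiplication by `g_k` and by `ξ_{k+1/2}`.
* The super-Virasoro operators of the supereigenvalue model
  (eqs. (3.10)-(3.11) of the paper, with `v = (t_s/2N)²`) are indexed by the
  integers `n ≥ -1`; we reindex them by `m : ℕ` via `n = m - 1` (a bijection from
  `ℕ` onto `{n : ℤ | n ≥ -1}`): `Lop T₂ v m` is `L_{m-1}` and `Gop T₂ v m` is
  `G_{(m-1)+1/2} = G_{m-1/2}`.  Concretely (with `n = m-1`):

  `L_n = T₂ ∂/∂g_{n+2} + Σ_{k≥1} k g_k ∂/∂g_{k+n} + (v/2) Σ_{j=0}^{n} ∂²/(∂g_j∂g_{n-j})`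
  `      + Σ_{k≥0, k+n≥0} (k+(n+1)/2) ξ_{k+1/2} ∂/∂ξ_{n+k+1/2}`
  `      + (v/2) Σ_{j=0}^{n-1} ((n-1)/2 - j) ∂²/(∂ξ_{j+1/2}∂ξ_{n-j-1/2})`,

  `G_{n+1/2} = T₂ ∂/∂ξ_{n+5/2} + Σ_{k≥1} k g_k ∂/∂ξ_{n+k+1/2}`
  `      + Σ_{k≥0} ξ_{k+1/2} ∂/∂g_{k+n+1} + v Σ_{j=0}^{n} (∂/∂ξ_{j+1/2})(∂/∂g_{n-j})`.

  The infinite sums over `k` are taken pointwise via `finsum` (on each element of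
  `A` only finitely many summands act nontrivially); a `k = 0` summand whose
  stated range is `k ≥ 1` carries the coefficient `0`, so including it is
  harmless.  Sums `Σ_{j=0}^{n}` and `Σ_{j=0}^{n-1}` are `Finset.range m` and
  `Finset.range (m-1)` respectively (empty when the upper limit is negative).
-/

open scoped TensorProduct

set_option synthInstance.maxHeartbeats 1000000
set_option maxHeartbeats 1000000

/-!
Statement 5: the fermionic super-Virasoro constraints imply the bosonic ones:
if `𝒵 ∈ A` satisfies `G_{n+1/2} 𝒵 = 0` for every integer `n ≥ -1`, then
`L_n 𝒵 = 0` for every integer `n ≥ -1` (reindexed by `m : ℕ`, `n = m - 1`).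
-/
namespace SVtest

open MvPolynomial TensorProduct Finset

lemma dg_tmul (i : ℕ) (p : MvPolynomial ℕ ℝ) (x : ExteriorAlgebra ℝ (ℕ →₀ ℝ)) :
    dg i (p ⊗ₜ x) = MvPolynomial.pderiv i p ⊗ₜ x := rfl

lemma dxi_tmul (i : ℕ) (p : MvPolynomial ℕ ℝ) (x : ExteriorAlgebra ℝ (ℕ →₀ ℝ)) :
    dxi i (p ⊗ₜ x) = p ⊗ₜ
      (CliffordAlgebra.contractLeft (Q := (0 : QuadraticForm ℝ (ℕ →₀ ℝ))) (Finsupp.lapply i) x) := rfl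

lemma gmul_tmul (k : ℕ) (p : MvPolynomial ℕ ℝ) (x : ExteriorAlgebra ℝ (ℕ →₀ ℝ)) :
    gmul k (p ⊗ₜ x) = (MvPolynomial.X k * p) ⊗ₜ x := by
  simp [gmul, LinearMap.mulLeft_apply, Algebra.TensorProduct.tmul_mul_tmul]

lemma ximul_tmul (k : ℕ) (p : MvPolynomial ℕ ℝ) (x : ExteriorAlgebra ℝ (ℕ →₀ ℝ)) :
    ximul k (p ⊗ₜ x) = p ⊗ₜ (ExteriorAlgebra.ι ℝ (Finsupp.single k 1) * x) := by
  simp [ximul, LinearMap.mulLeft_apply, Algebra.TensorProduct.tmul_mul_tmul]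

lemma pderiv_comm (i j : ℕ) (p : MvPolynomial ℕ ℝ) :
    pderiv i (pderiv j p) = pderiv j (pderiv i p) := by
  induction p using MvPolynomial.induction_on with
  | C a => simp
  | add p q hp hq => simp [hp, hq]
  | mul_X p n hp =>
      simp only [pderiv_mul, map_add, hp, pderiv_X, Pi.single_apply,
        apply_ite (pderiv i), apply_ite (pderiv j), pderiv_one, map_zero]
      split_ifs <;> ring


lemma dg_dg (i j : ℕ) (a : SEA) : dg i (dg j a) = dg j (dg i a) := by
  induction a using TensorProduct.induction_on with
  | zero => simp
  | tmul p x => simp [dg_tmul, pderiv_comm]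
  | add x y hx hy => simp [map_add, hx, hy]

lemma dg_dxi (i j : ℕ) (a : SEA) : dg i (dxi j a) = dxi j (dg i a) := by
  induction a using TensorProduct.induction_on with
  | zero => simp
  | tmul p x => simp [dg_tmul, dxi_tmul]
  | add x y hx hy => simp [map_add, hx, hy]

lemma dxi_dxi (i j : ℕ) (a : SEA) : dxi i (dxi j a) = - dxi j (dxi i a) := by
  induction a using TensorProduct.induction_on with
  | zero => simp
  | tmul p x =>
      simp only [dxi_tmul]
      rw [CliffordAlgebra.contractLeft_comm, TensorProduct.tmul_neg]
  | add x y hx hy => simp [map_add, hx, hy]; abel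

lemma dxi_gmul (i k : ℕ) (a : SEA) : dxi i (gmul k a) = gmul k (dxi i a) := by
  induction a using TensorProduct.induction_on with
  | zero => simp
  | tmul p x => simp [dxi_tmul, gmul_tmul]
  | add x y hx hy => simp [map_add, hx, hy]

lemma dg_ximul (i k : ℕ) (a : SEA) : dg i (ximul k a) = ximul k (dg i a) := by
  induction a using TensorProduct.induction_on with
  | zero => simp
  | tmul p x => simp [dg_tmul, ximul_tmul]
  | add x y hx hy => simp [map_add, hx, hy]

lemma dg_gmul (i k : ℕ) (a : SEA) :
    dg i (gmul k a) = (if i = k then a else 0) + gmul k (dg i a) := by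
  induction a using TensorProduct.induction_on with
  | zero => simp
  | tmul p x =>
      rw [gmul_tmul, dg_tmul, pderiv_mul, TensorProduct.add_tmul]
      rcases eq_or_ne i k with rfl | h
      · simp [gmul_tmul, dg_tmul]
      · simp [pderiv_X_of_ne (Ne.symm h), h, gmul_tmul, dg_tmul]
  | add x y hx hy =>
      simp only [map_add, hx, hy]
      split_ifs <;> abel

lemma dxi_ximul (i k : ℕ) (a : SEA) :
    dxi i (ximul k a) = (if i = k then a else 0) - ximul k (dxi i a) := by
  induction a using TensorProduct.induction_on with
  | zero => simp
  | tmul p x =>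
      simp only [dxi_tmul, ximul_tmul, CliffordAlgebra.contractLeft_ι_mul,
        Finsupp.lapply_apply, Finsupp.single_apply, TensorProduct.tmul_sub,
        TensorProduct.tmul_smul]
      rcases eq_or_ne i k with rfl | h
      · simp
      · simp [h, Ne.symm h]
  | add x y hx hy =>
      simp only [map_add, hx, hy]
      split_ifs <;> abel

lemma gmul_gmul (k l : ℕ) (a : SEA) : gmul k (gmul l a) = gmul l (gmul k a) := by
  simp only [gmul, LinearMap.mulLeft_apply, ← mul_assoc,
    Algebra.TensorProduct.tmul_mul_tmul, one_mul, mul_comm (MvPolynomial.X k)]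

lemma gmul_ximul (k l : ℕ) (a : SEA) : gmul k (ximul l a) = ximul l (gmul k a) := by
  simp only [gmul, ximul, LinearMap.mulLeft_apply, ← mul_assoc,
    Algebra.TensorProduct.tmul_mul_tmul, one_mul, mul_one]

lemma ximul_ximul (k l : ℕ) (a : SEA) : ximul k (ximul l a) = - ximul l (ximul k a) := by
  have h : ExteriorAlgebra.ι ℝ (Finsupp.single k (1:ℝ)) * ExteriorAlgebra.ι ℝ (Finsupp.single l 1)
      = - (ExteriorAlgebra.ι ℝ (Finsupp.single l 1) * ExteriorAlgebra.ι ℝ (Finsupp.single k 1)) :=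
    eq_neg_of_add_eq_zero_left (ExteriorAlgebra.ι_add_mul_swap _ _)
  simp only [ximul, LinearMap.mulLeft_apply, ← mul_assoc,
    Algebra.TensorProduct.tmul_mul_tmul, one_mul, mul_one, h,
    TensorProduct.tmul_neg]
  exact neg_mul _ a


local notation "EA" => ExteriorAlgebra ℝ (ℕ →₀ ℝ)

noncomputable def ctr (i : ℕ) : EA →ₗ[ℝ] EA :=
  CliffordAlgebra.contractLeft (Q := (0 : QuadraticForm ℝ (ℕ →₀ ℝ))) (Finsupp.lapply i)

lemma ctr_fin_monomial (l : List (ℕ →₀ ℝ)) :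
    (Function.support fun i => ctr i (l.map (ExteriorAlgebra.ι ℝ)).prod).Finite := by
  induction l with
  | nil =>
      convert Set.finite_empty
      ext i
      simp [ctr, CliffordAlgebra.contractLeft_one]
  | cons v l ih =>
      refine Set.Finite.subset ((v.support.finite_toSet).union ih) ?_
      intro i hi
      by_contra hmem
      simp only [Set.mem_union, Finset.mem_coe, Finsupp.mem_support_iff, Function.mem_support,
        not_or, not_not] at hmem
      apply hi
      simp only [List.map_cons, List.prod_cons, ctr, CliffordAlgebra.contractLeft_ι_mul]
      rw [show CliffordAlgebra.contractLeft (Finsupp.lapply i)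
        (List.map (ExteriorAlgebra.ι ℝ) l).prod = ctr i (List.map (ExteriorAlgebra.ι ℝ) l).prod
        from rfl, hmem.2]
      simp [hmem.1]

lemma ctr_fin (x : EA) : (Function.support fun i => ctr i x).Finite := by
  have hx : x ∈ Submodule.span ℝ {y : EA | ∃ l : List (ℕ →₀ ℝ),
      y = (l.map (ExteriorAlgebra.ι ℝ)).prod} := by
    suffices h : Submodule.span ℝ {y : EA | ∃ l : List (ℕ →₀ ℝ),
        y = (l.map (ExteriorAlgebra.ι ℝ)).prod} = ⊤ by rw [h]; trivial
    rw [Submodule.eq_top_iff']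
    intro z
    induction z using CliffordAlgebra.induction with
    | algebraMap r =>
        rw [Algebra.algebraMap_eq_smul_one]
        exact Submodule.smul_mem _ r (Submodule.subset_span ⟨[], by simp⟩)
    | ι v => exact Submodule.subset_span ⟨[v], by simp⟩
    | mul x y hx hy =>
        have h2 := Submodule.mul_mem_mul hx hy
        rw [Submodule.span_mul_span] at h2
        refine Submodule.span_le.mpr ?_ h2
        rintro w ⟨p, ⟨lp, rfl⟩, q, ⟨lq, rfl⟩, rfl⟩
        exact Submodule.subset_span ⟨lp ++ lq, by simp⟩
    | add x y hx hy => exact Submodule.add_mem _ hx hy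
  induction hx using Submodule.span_induction with
  | mem y hy => obtain ⟨l, rfl⟩ := hy; exact ctr_fin_monomial l
  | zero => simp only [map_zero]; convert Set.finite_empty; ext i; simp
  | add y z hy hz ihy ihz =>
      refine Set.Finite.subset (ihy.union ihz) ?_
      intro i hi
      by_contra hmem
      simp only [Set.mem_union, Function.mem_support, not_or, not_not] at hmem
      exact hi (by simp [map_add, hmem.1, hmem.2])
  | smul r y hy ihy =>
      refine Set.Finite.subset ihy ?_
      intro i hi
      by_contra hmem
      simp only [Function.mem_support, not_not] at hmem
      exact hi (by simp [map_smul, hmem])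

lemma dxi_fin (a : SEA) : (Function.support fun i => dxi i a).Finite := by
  induction a using TensorProduct.induction_on with
  | zero =>
      convert Set.finite_empty; ext i; simp
  | tmul p x =>
      refine Set.Finite.subset (ctr_fin x) ?_
      intro i hi
      by_contra hmem
      simp only [Function.mem_support, not_not] at hmem
      exact hi (by show dxi i (p ⊗ₜ x) = 0; rw [dxi_tmul, show CliffordAlgebra.contractLeft (Finsupp.lapply i) x
        = ctr i x from rfl, hmem, TensorProduct.tmul_zero])
  | add x y hx hy =>
      refine Set.Finite.subset (hx.union hy) ?_
      intro i hi
      by_contra hmem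
      simp only [Set.mem_union, Function.mem_support, not_or, not_not] at hmem
      exact hi (by simp [map_add, hmem.1, hmem.2])

lemma dg_fin (a : SEA) : (Function.support fun i => dg i a).Finite := by
  induction a using TensorProduct.induction_on with
  | zero =>
      convert Set.finite_empty; ext i; simp
  | tmul p x =>
      refine Set.Finite.subset p.vars.finite_toSet ?_
      intro i hi
      by_contra hmem
      exact hi (by show dg i (p ⊗ₜ x) = 0; rw [dg_tmul, MvPolynomial.pderiv_eq_zero_of_notMem_vars
        (by simpa using hmem), TensorProduct.zero_tmul])
  | add x y hx hy =>
      refine Set.Finite.subset (hx.union hy) ?_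
      intro i hi
      by_contra hmem
      simp only [Set.mem_union, Function.mem_support, not_or, not_not] at hmem
      exact hi (by simp [map_add, hmem.1, hmem.2])

lemma exists_bound (a : SEA) : ∃ N : ℕ, ∀ i, N ≤ i → dg i a = 0 ∧ dxi i a = 0 := by
  obtain ⟨n, hn⟩ := ((dg_fin a).union (dxi_fin a)).bddAbove
  refine ⟨n + 1, fun i hi => ?_⟩
  constructor
  · by_contra h
    exact absurd (hn (Set.mem_union_left _ h)) (by omega)
  · by_contra h
    exact absurd (hn (Set.mem_union_right _ h)) (by omega)


lemma sum4_congr {M : Type*} [AddCommMonoid M] {a b c d a' b' c' d' : M}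
    (h1 : a = a') (h2 : b = b') (h3 : c = c') (h4 : d = d') :
    a + b + c + d = a' + b' + c' + d' := by rw [h1, h2, h3, h4]

lemma sum3_congr {M : Type*} [AddCommMonoid M] {a b c a' b' c' : M}
    (h1 : a = a') (h2 : b = b') (h3 : c = c') :
    a + b + c = a' + b' + c' := by rw [h1, h2, h3]

lemma HF_lemma (m N : ℕ) (a : SEA) :
    ∑ k ∈ Finset.range N, (k:ℝ) • ximul k (dxi (m + k - 1) a)
      = (2:ℝ) • (∑ k ∈ Finset.range N,
          if m + k = 0 then 0 else ((k:ℝ) + (m:ℝ) / 2) • ximul k (dxi (m + k - 1) a))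
        - ∑ k ∈ Finset.range N, ((k:ℝ) + (m:ℝ)) • ximul k (dxi (m + k - 1) a) := by
  rw [eq_sub_iff_add_eq, ← Finset.sum_add_distrib, Finset.smul_sum]
  refine Finset.sum_congr rfl fun k _ => ?_
  by_cases h : m + k = 0
  · obtain ⟨hm, hk⟩ : m = 0 ∧ k = 0 := by omega
    subst hm; subst hk
    simp
  · rw [if_neg h, ← add_smul, smul_smul]
    congr 1
    ring

lemma Hff_lemma (m : ℕ) (a : SEA) :
    ∑ j ∈ Finset.range m, ((m - 1 - j : ℕ):ℝ) • dxi j (dxi (m - 1 - j - 1) a)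
      = ∑ j ∈ Finset.range (m - 1), (((m:ℝ) - 2) / 2 - (j:ℝ)) • dxi j (dxi (m - j - 2) a) := by
  rcases m with _ | m'
  · simp
  · rw [Finset.sum_range_succ, show m' + 1 - 1 - m' = 0 from by omega, Nat.cast_zero, zero_smul,
      add_zero, show m' + 1 - 1 = m' from rfl]
    have key : ∑ j ∈ Finset.range m', dxi j (dxi (m' - 1 - j) a) = 0 := by
      have h2 : ∑ j ∈ Finset.range m', dxi j (dxi (m' - 1 - j) a)
          = -∑ j ∈ Finset.range m', dxi j (dxi (m' - 1 - j) a) := by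
        conv_lhs => rw [← Finset.sum_range_reflect]
        rw [Finset.sum_congr rfl (fun j hj => ?_), Finset.sum_neg_distrib]
        rw [Finset.mem_range] at hj
        rw [show m' - 1 - (m' - 1 - j) = j from by omega, dxi_dxi]
      have h3 : (2:ℝ) • ∑ j ∈ Finset.range m', dxi j (dxi (m' - 1 - j) a) = 0 := by
        rw [two_smul]
        nth_rewrite 2 [h2]
        exact add_neg_cancel _
      exact (smul_eq_zero.mp h3).resolve_left (by norm_num)
    have split : ∀ j ∈ Finset.range m', ((m' - j : ℕ):ℝ) • dxi j (dxi (m' - j - 1) a)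
        = ((((m':ℝ) + 1) - 2) / 2 - (j:ℝ)) • dxi j (dxi (m' + 1 - j - 2) a)
          + (((m':ℝ) + 1) / 2) • dxi j (dxi (m' - 1 - j) a) := by
      intro j hj
      rw [Finset.mem_range] at hj
      rw [show m' + 1 - j - 2 = m' - 1 - j from by omega, show m' - j - 1 = m' - 1 - j from by omega,
        ← add_smul]
      congr 1
      rw [Nat.cast_sub (by omega)]
      ring
    rw [Finset.sum_congr rfl split, Finset.sum_add_distrib, ← Finset.smul_sum, key, smul_zero,
      add_zero]
    refine Finset.sum_congr rfl fun j hj => ?_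
    congr 2
    push_cast
    ring

lemma Gop_zero (T₂ v : ℝ) (μ : ℕ) : Gop T₂ v μ 0 = 0 := by
  unfold Gop
  simp

lemma Gop_eq_sum (T₂ v : ℝ) (μ N : ℕ) (c : SEA)
    (h : ∀ i, N ≤ i + 2 → dg i c = 0 ∧ dxi i c = 0) :
    Gop T₂ v μ c = T₂ • dxi (μ+1) c
      + ∑ k ∈ Finset.range N, (k:ℝ) • gmul k (dxi (μ+k-1) c)
      + ∑ k ∈ Finset.range N, ximul k (dg (k+μ) c)
      + v • ∑ j ∈ Finset.range μ, dxi j (dg (μ-1-j) c) := by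
  unfold Gop
  rw [finsum_eq_sum_of_support_subset _ (s := Finset.range N)
      (by intro k hk
          simp only [Function.mem_support] at hk
          simp only [Finset.coe_range, Set.mem_Iio]
          by_contra hkN
          exact hk (by rw [(h (μ+k-1) (by omega)).2, map_zero, smul_zero])),
    finsum_eq_sum_of_support_subset _ (s := Finset.range N)
      (by intro k hk
          simp only [Function.mem_support] at hk
          simp only [Finset.coe_range, Set.mem_Iio]
          by_contra hkN
          exact hk (by rw [(h (k+μ) (by omega)).1, map_zero]))]

lemma Lop_eq_sum (T₂ v : ℝ) (m N : ℕ) (c : SEA)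
    (h : ∀ i, N ≤ i + 2 → dg i c = 0 ∧ dxi i c = 0) :
    Lop T₂ v m c = T₂ • dg (m+1) c
      + ∑ k ∈ Finset.range N, (k:ℝ) • gmul k (dg (m+k-1) c)
      + (v/2) • ∑ j ∈ Finset.range m, dg j (dg (m-1-j) c)
      + ∑ k ∈ Finset.range N, (if m+k = 0 then 0 else ((k:ℝ)+(m:ℝ)/2) • ximul k (dxi (m+k-1) c))
      + (v/2) • ∑ j ∈ Finset.range (m-1), (((m:ℝ)-2)/2 - (j:ℝ)) • dxi j (dxi (m-j-2) c) := by
  unfold Lop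
  rw [finsum_eq_sum_of_support_subset _ (s := Finset.range N)
      (by intro k hk
          simp only [Function.mem_support] at hk
          simp only [Finset.coe_range, Set.mem_Iio]
          by_contra hkN
          exact hk (by rw [(h (m+k-1) (by omega)).1, map_zero, smul_zero])),
    finsum_eq_sum_of_support_subset _ (s := Finset.range N)
      (by intro k hk
          simp only [Function.mem_support] at hk
          simp only [Finset.coe_range, Set.mem_Iio]
          by_contra hkN
          refine hk ?_
          rw [(h (m+k-1) (by omega)).2]
          simp)]



lemma anticomm (T₂ v : ℝ) (m : ℕ) (a : SEA) :
    Gop T₂ v 0 (Gop T₂ v m a) + Gop T₂ v m (Gop T₂ v 0 a) = (2:ℝ) • Lop T₂ v m a := by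
  obtain ⟨N₁, h₁⟩ := exists_bound a
  obtain ⟨N₂, h₂⟩ := exists_bound (Gop T₂ v m a)
  obtain ⟨N₃, h₃⟩ := exists_bound (Gop T₂ v 0 a)
  set N := N₁ + N₂ + N₃ + m + 3 with hN
  have ha : ∀ i, N ≤ i + 2 → dg i a = 0 ∧ dxi i a = 0 := fun i hi => h₁ i (by omega)
  have hc1 : ∀ i, N ≤ i + 2 → dg i (Gop T₂ v m a) = 0 ∧ dxi i (Gop T₂ v m a) = 0 :=
    fun i hi => h₂ i (by omega)
  have hc2 : ∀ i, N ≤ i + 2 → dg i (Gop T₂ v 0 a) = 0 ∧ dxi i (Gop T₂ v 0 a) = 0 :=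
    fun i hi => h₃ i (by omega)
  rw [Gop_eq_sum T₂ v 0 N (Gop T₂ v m a) hc1, Gop_eq_sum T₂ v m N (Gop T₂ v 0 a) hc2,
      Gop_eq_sum T₂ v m N a ha, Gop_eq_sum T₂ v 0 N a ha, Lop_eq_sum T₂ v m N a ha]
  simp only [Nat.add_zero, Nat.zero_add, Finset.range_zero, Finset.sum_empty, smul_zero, add_zero]
  clear hc1 hc2 h₁ h₂ h₃ hN
  set b1 := T₂ • dxi (m + 1) a + ∑ k ∈ Finset.range N, (k:ℝ) • gmul k (dxi (m + k - 1) a)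
      + ∑ k ∈ Finset.range N, ximul k (dg (k + m) a)
      + v • ∑ j ∈ Finset.range m, dxi j (dg (m - 1 - j) a) with hb1def
  set b2 := T₂ • dxi 1 a + ∑ k ∈ Finset.range N, (k:ℝ) • gmul k (dxi (k - 1) a)
      + ∑ k ∈ Finset.range N, ximul k (dg k a) with hb2def
  have H1 : dxi 1 b1 =
      T₂ • dxi 1 (dxi (m + 1) a)
      + ∑ k ∈ Finset.range N, (k:ℝ) • gmul k (dxi 1 (dxi (m + k - 1) a))
      + (dg (m + 1) a - ∑ k ∈ Finset.range N, ximul k (dxi 1 (dg (k + m) a)))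
      + v • ∑ j ∈ Finset.range m, dxi 1 (dxi j (dg (m - 1 - j) a)) := by
    rw [hb1def]
    simp only [map_add, map_smul, map_sum, dxi_gmul, dxi_ximul, Finset.sum_sub_distrib,
      Finset.sum_ite_eq, Finset.mem_range]
    rw [if_pos (show (1:ℕ) < N by omega), show 1 + m = m + 1 from Nat.add_comm 1 m]
  have H2 : ∑ k ∈ Finset.range N, (k:ℝ) • gmul k (dxi (k - 1) b1) =
      T₂ • ∑ k ∈ Finset.range N, (k:ℝ) • gmul k (dxi (k - 1) (dxi (m + 1) a))
      + ∑ k ∈ Finset.range N, ∑ l ∈ Finset.range N,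
          ((k:ℝ) * (l:ℝ)) • gmul k (gmul l (dxi (k - 1) (dxi (m + l - 1) a)))
      + (∑ k ∈ Finset.range N, (k:ℝ) • gmul k (dg (m + k - 1) a)
         - ∑ k ∈ Finset.range N, ∑ l ∈ Finset.range N,
             (k:ℝ) • gmul k (ximul l (dxi (k - 1) (dg (l + m) a))))
      + v • ∑ k ∈ Finset.range N, ∑ j ∈ Finset.range m,
          (k:ℝ) • gmul k (dxi (k - 1) (dxi j (dg (m - 1 - j) a))) := by
    rw [hb1def]
    have e : ∀ k ∈ Finset.range N, (k:ℝ) • gmul k (dxi (k - 1)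
          (T₂ • dxi (m + 1) a + ∑ l ∈ Finset.range N, (l:ℝ) • gmul l (dxi (m + l - 1) a)
            + ∑ l ∈ Finset.range N, ximul l (dg (l + m) a)
            + v • ∑ j ∈ Finset.range m, dxi j (dg (m - 1 - j) a)))
        = T₂ • ((k:ℝ) • gmul k (dxi (k - 1) (dxi (m + 1) a)))
          + ∑ l ∈ Finset.range N, ((k:ℝ) * (l:ℝ)) • gmul k (gmul l (dxi (k - 1) (dxi (m + l - 1) a)))
          + ((k:ℝ) • gmul k (dg (m + k - 1) a)
             - ∑ l ∈ Finset.range N, (k:ℝ) • gmul k (ximul l (dxi (k - 1) (dg (l + m) a))))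
          + v • ∑ j ∈ Finset.range m, (k:ℝ) • gmul k (dxi (k - 1) (dxi j (dg (m - 1 - j) a))) := by
      intro k hk
      rw [Finset.mem_range] at hk
      rw [map_add, map_add, map_add, map_add, map_add, map_add, smul_add, smul_add, smul_add]
      refine sum4_congr ?_ ?_ ?_ ?_
      · rw [map_smul, map_smul, smul_comm]
      · rw [map_sum, map_sum, Finset.smul_sum]
        exact Finset.sum_congr rfl fun l _ => by
          rw [map_smul (dxi (k-1)), dxi_gmul, map_smul (gmul k), smul_smul]
      · rw [map_sum, Finset.sum_congr rfl (fun l _ => dxi_ximul (k-1) l _),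
          Finset.sum_sub_distrib, Finset.sum_ite_eq,
          if_pos (Finset.mem_range.mpr (show k - 1 < N by omega)), map_sub, smul_sub,
          map_sum, Finset.smul_sum]
        congr 1
        rcases Nat.eq_zero_or_pos k with rfl | hkpos
        · simp
        · rw [show k - 1 + m = m + k - 1 by omega]
      · rw [map_smul, map_smul, smul_comm, map_sum, map_sum, Finset.smul_sum]
    rw [Finset.sum_congr rfl e]
    simp only [Finset.sum_add_distrib, Finset.sum_sub_distrib]
    rw [← Finset.smul_sum, ← Finset.smul_sum]
  have H3 : ∑ k ∈ Finset.range N, ximul k (dg k b1) =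
      T₂ • ∑ k ∈ Finset.range N, ximul k (dxi (m + 1) (dg k a))
      + (∑ k ∈ Finset.range N, (k:ℝ) • ximul k (dxi (m + k - 1) a)
         + ∑ k ∈ Finset.range N, ∑ l ∈ Finset.range N,
             (l:ℝ) • gmul l (ximul k (dxi (m + l - 1) (dg k a))))
      + ∑ k ∈ Finset.range N, ∑ l ∈ Finset.range N, ximul k (ximul l (dg k (dg (l + m) a)))
      + v • ∑ k ∈ Finset.range N, ∑ j ∈ Finset.range m,
          ximul k (dxi j (dg k (dg (m - 1 - j) a))) := by
    rw [hb1def]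
    have e : ∀ k ∈ Finset.range N, ximul k (dg k (T₂ • dxi (m + 1) a
          + ∑ l ∈ Finset.range N, (l:ℝ) • gmul l (dxi (m + l - 1) a)
          + ∑ l ∈ Finset.range N, ximul l (dg (l + m) a)
          + v • ∑ j ∈ Finset.range m, dxi j (dg (m - 1 - j) a)))
        = T₂ • ximul k (dxi (m + 1) (dg k a))
          + ((k:ℝ) • ximul k (dxi (m + k - 1) a)
             + ∑ l ∈ Finset.range N, (l:ℝ) • gmul l (ximul k (dxi (m + l - 1) (dg k a))))
          + ∑ l ∈ Finset.range N, ximul k (ximul l (dg k (dg (l + m) a)))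
          + v • ∑ j ∈ Finset.range m, ximul k (dxi j (dg k (dg (m - 1 - j) a))) := by
      intro k hk
      rw [map_add, map_add, map_add, map_add, map_add, map_add]
      refine sum4_congr ?_ ?_ ?_ ?_
      · rw [map_smul, map_smul, dg_dxi]
      · rw [map_sum, map_sum]
        have e2 : ∀ l ∈ Finset.range N, ximul k (dg k ((l:ℝ) • gmul l (dxi (m + l - 1) a)))
            = (if k = l then (l:ℝ) • ximul k (dxi (m + l - 1) a) else 0)
              + (l:ℝ) • gmul l (ximul k (dxi (m + l - 1) (dg k a))) := by
          intro l _
          rw [map_smul, map_smul, dg_gmul, dg_dxi, map_add, smul_add,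
            apply_ite (ximul k), map_zero, ← gmul_ximul]
          congr 1
          split_ifs <;> simp
        rw [Finset.sum_congr rfl e2, Finset.sum_add_distrib, Finset.sum_ite_eq, if_pos hk]
      · rw [map_sum, map_sum]
        exact Finset.sum_congr rfl fun l _ => by rw [dg_ximul]
      · rw [map_smul, map_smul, map_sum, map_sum]
        refine congrArg (v • ·) (Finset.sum_congr rfl fun j _ => ?_)
        rw [dg_dxi]
    rw [Finset.sum_congr rfl e]
    simp only [Finset.sum_add_distrib]
    rw [← Finset.smul_sum, ← Finset.smul_sum]
  have H4 : dxi (m + 1) b2 =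
      T₂ • -(dxi 1 (dxi (m + 1) a))
      + -(∑ k ∈ Finset.range N, (k:ℝ) • gmul k (dxi (k - 1) (dxi (m + 1) a)))
      + (dg (m + 1) a - ∑ k ∈ Finset.range N, ximul k (dxi (m + 1) (dg k a))) := by
    rw [hb2def]
    simp only [map_add, map_smul, map_sum, dxi_gmul, dxi_ximul, Finset.sum_sub_distrib,
      Finset.sum_ite_eq, Finset.mem_range]
    have e2 : ∀ k ∈ Finset.range N, (k:ℝ) • gmul k (dxi (m + 1) (dxi (k - 1) a))
        = -((k:ℝ) • gmul k (dxi (k - 1) (dxi (m + 1) a))) := by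
      intro k _
      rw [dxi_dxi (m+1) (k-1) a, map_neg, smul_neg]
    rw [if_pos (show m + 1 < N by omega), dxi_dxi (m+1) 1 a, Finset.sum_congr rfl e2,
      Finset.sum_neg_distrib]
  have H5 : ∑ k ∈ Finset.range N, (k:ℝ) • gmul k (dxi (m + k - 1) b2) =
      T₂ • -(∑ k ∈ Finset.range N, (k:ℝ) • gmul k (dxi 1 (dxi (m + k - 1) a)))
      + -(∑ k ∈ Finset.range N, ∑ l ∈ Finset.range N,
          ((k:ℝ) * (l:ℝ)) • gmul k (gmul l (dxi (k - 1) (dxi (m + l - 1) a))))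
      + (∑ k ∈ Finset.range N, (k:ℝ) • gmul k (dg (m + k - 1) a)
         - ∑ k ∈ Finset.range N, ∑ l ∈ Finset.range N,
             (l:ℝ) • gmul l (ximul k (dxi (m + l - 1) (dg k a)))) := by
    rw [hb2def]
    have e : ∀ k ∈ Finset.range N, (k:ℝ) • gmul k (dxi (m + k - 1)
          (T₂ • dxi 1 a + ∑ l ∈ Finset.range N, (l:ℝ) • gmul l (dxi (l - 1) a)
            + ∑ l ∈ Finset.range N, ximul l (dg l a)))
        = T₂ • -((k:ℝ) • gmul k (dxi 1 (dxi (m + k - 1) a)))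
          + -(∑ l ∈ Finset.range N, ((l:ℝ) * (k:ℝ)) • gmul l (gmul k (dxi (l - 1) (dxi (m + k - 1) a))))
          + ((k:ℝ) • gmul k (dg (m + k - 1) a)
             - ∑ l ∈ Finset.range N, (k:ℝ) • gmul k (ximul l (dxi (m + k - 1) (dg l a)))) := by
      intro k hk
      rw [Finset.mem_range] at hk
      rw [map_add, map_add, map_add, map_add, smul_add, smul_add]
      refine sum3_congr ?_ ?_ ?_
      · rw [map_smul (dxi (m + k - 1)), dxi_dxi (m + k - 1) 1 a, map_smul (gmul k),
          map_neg (gmul k)]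
        module
      · rw [map_sum, map_sum, Finset.smul_sum]
        refine Eq.trans (Finset.sum_congr rfl fun l _ => ?_) (Finset.sum_neg_distrib _)
        simp only [map_smul, dxi_gmul]
        rw [dxi_dxi (m + k - 1) (l - 1) a, gmul_gmul k l]
        simp only [map_neg, smul_neg]
        module
      · rw [map_sum, Finset.sum_congr rfl (fun l _ => dxi_ximul (m + k - 1) l _),
          Finset.sum_sub_distrib, Finset.sum_ite_eq, map_sub, smul_sub, map_sum,
          Finset.smul_sum]
        congr 1
        rcases lt_or_ge (m + k - 1) N with h | h
        · rw [if_pos (Finset.mem_range.mpr h)]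
        · rw [if_neg (by simpa using h), (ha (m + k - 1) (by omega)).1]
    rw [Finset.sum_congr rfl e]
    simp only [Finset.sum_add_distrib, Finset.sum_sub_distrib, Finset.sum_neg_distrib]
    rw [← Finset.smul_sum, Finset.sum_neg_distrib,
      Finset.sum_comm (s := Finset.range N) (t := Finset.range N)
        (f := fun k l => ((l:ℝ) * (k:ℝ)) • gmul l (gmul k (dxi (l - 1) (dxi (m + k - 1) a)))),
      Finset.sum_comm (s := Finset.range N) (t := Finset.range N)
        (f := fun k l => (k:ℝ) • gmul k (ximul l (dxi (m + k - 1) (dg l a))))]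
  have H6 : ∑ k ∈ Finset.range N, ximul k (dg (k + m) b2) =
      T₂ • ∑ k ∈ Finset.range N, ximul k (dxi 1 (dg (k + m) a))
      + (∑ k ∈ Finset.range N, ((k:ℝ) + (m:ℝ)) • ximul k (dxi (m + k - 1) a)
         + ∑ k ∈ Finset.range N, ∑ l ∈ Finset.range N,
             (k:ℝ) • gmul k (ximul l (dxi (k - 1) (dg (l + m) a))))
      + -(∑ k ∈ Finset.range N, ∑ l ∈ Finset.range N, ximul k (ximul l (dg k (dg (l + m) a)))) := by
    rw [hb2def]
    have e : ∀ k ∈ Finset.range N, ximul k (dg (k + m)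
          (T₂ • dxi 1 a + ∑ l ∈ Finset.range N, (l:ℝ) • gmul l (dxi (l - 1) a)
            + ∑ l ∈ Finset.range N, ximul l (dg l a)))
        = T₂ • ximul k (dxi 1 (dg (k + m) a))
          + (((k:ℝ) + (m:ℝ)) • ximul k (dxi (m + k - 1) a)
             + ∑ l ∈ Finset.range N, (l:ℝ) • gmul l (ximul k (dxi (l - 1) (dg (k + m) a))))
          + -(∑ l ∈ Finset.range N, ximul l (ximul k (dg l (dg (k + m) a)))) := by
      intro k hk
      rw [Finset.mem_range] at hk
      rw [map_add, map_add, map_add, map_add]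
      refine sum3_congr ?_ ?_ ?_
      · rw [map_smul, map_smul, dg_dxi]
      · rw [map_sum, map_sum]
        have e2 : ∀ l ∈ Finset.range N, ximul k (dg (k + m) ((l:ℝ) • gmul l (dxi (l - 1) a)))
            = (if k + m = l then (l:ℝ) • ximul k (dxi (l - 1) a) else 0)
              + (l:ℝ) • gmul l (ximul k (dxi (l - 1) (dg (k + m) a))) := by
          intro l _
          rw [map_smul, map_smul, dg_gmul, dg_dxi, map_add, smul_add,
            apply_ite (ximul k), map_zero, ← gmul_ximul]
          congr 1
          split_ifs <;> simp
        rw [Finset.sum_congr rfl e2, Finset.sum_add_distrib, Finset.sum_ite_eq]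
        congr 1
        rcases lt_or_ge (k + m) N with h | h
        · rw [if_pos (Finset.mem_range.mpr h), show k + m - 1 = m + k - 1 from by omega]
          congr 1
          push_cast
          ring
        · rw [if_neg (by simpa using h), (ha (m + k - 1) (by omega)).2, map_zero, smul_zero]
      · rw [map_sum, map_sum]
        refine Eq.trans (Finset.sum_congr rfl fun l _ => ?_) (Finset.sum_neg_distrib _)
        rw [dg_ximul, dg_dg (k + m) l a, ximul_ximul]
    rw [Finset.sum_congr rfl e]
    simp only [Finset.sum_add_distrib, Finset.sum_neg_distrib]
    rw [← Finset.smul_sum,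
      Finset.sum_comm (s := Finset.range N) (t := Finset.range N)
        (f := fun k l => (l:ℝ) • gmul l (ximul k (dxi (l - 1) (dg (k + m) a)))),
      Finset.sum_comm (s := Finset.range N) (t := Finset.range N)
        (f := fun k l => ximul l (ximul k (dg l (dg (k + m) a))))]
  have H7 : ∑ j ∈ Finset.range m, dxi j (dg (m - 1 - j) b2) =
      -(T₂ • ∑ j ∈ Finset.range m, dxi 1 (dxi j (dg (m - 1 - j) a)))
      + (∑ j ∈ Finset.range m, ((m - 1 - j : ℕ):ℝ) • dxi j (dxi (m - 1 - j - 1) a)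
         - ∑ k ∈ Finset.range N, ∑ j ∈ Finset.range m,
             (k:ℝ) • gmul k (dxi (k - 1) (dxi j (dg (m - 1 - j) a))))
      + (∑ j ∈ Finset.range m, dg j (dg (m - 1 - j) a)
         - ∑ k ∈ Finset.range N, ∑ j ∈ Finset.range m,
             ximul k (dxi j (dg k (dg (m - 1 - j) a)))) := by
    rw [hb2def]
    have e : ∀ j ∈ Finset.range m, dxi j (dg (m - 1 - j)
          (T₂ • dxi 1 a + ∑ k ∈ Finset.range N, (k:ℝ) • gmul k (dxi (k - 1) a)
            + ∑ k ∈ Finset.range N, ximul k (dg k a)))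
        = -(T₂ • dxi 1 (dxi j (dg (m - 1 - j) a)))
          + (((m - 1 - j : ℕ):ℝ) • dxi j (dxi (m - 1 - j - 1) a)
             - ∑ k ∈ Finset.range N, (k:ℝ) • gmul k (dxi (k - 1) (dxi j (dg (m - 1 - j) a))))
          + (dg j (dg (m - 1 - j) a)
             - ∑ k ∈ Finset.range N, ximul k (dxi j (dg k (dg (m - 1 - j) a)))) := by
      intro j hj
      rw [Finset.mem_range] at hj
      rw [map_add, map_add, map_add, map_add]
      refine sum3_congr ?_ ?_ ?_
      · rw [map_smul, map_smul, dg_dxi, dxi_dxi j 1]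
        module
      · rw [map_sum, map_sum]
        have e2 : ∀ k ∈ Finset.range N, dxi j (dg (m - 1 - j) ((k:ℝ) • gmul k (dxi (k - 1) a)))
            = (if m - 1 - j = k then (k:ℝ) • dxi j (dxi (k - 1) a) else 0)
              - (k:ℝ) • gmul k (dxi (k - 1) (dxi j (dg (m - 1 - j) a))) := by
          intro k _
          rw [map_smul, map_smul, dg_gmul, map_add, smul_add, apply_ite (dxi j), map_zero,
            dxi_gmul, dg_dxi, dxi_dxi j (k - 1) (dg (m - 1 - j) a), map_neg, smul_neg,
            ← sub_eq_add_neg]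
          congr 1
          split_ifs <;> simp
        rw [Finset.sum_congr rfl e2, Finset.sum_sub_distrib, Finset.sum_ite_eq,
          if_pos (Finset.mem_range.mpr (show m - 1 - j < N by omega))]
      · rw [map_sum, map_sum]
        have e3 : ∀ k ∈ Finset.range N, dxi j (dg (m - 1 - j) (ximul k (dg k a)))
            = (if j = k then dg k (dg (m - 1 - j) a) else 0)
              - ximul k (dxi j (dg k (dg (m - 1 - j) a))) := by
          intro k _
          rw [dg_ximul, dxi_ximul, dg_dg (m - 1 - j) k a]
        rw [Finset.sum_congr rfl e3, Finset.sum_sub_distrib, Finset.sum_ite_eq,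
          if_pos (Finset.mem_range.mpr (show j < N by omega))]
    rw [Finset.sum_congr rfl e]
    simp only [Finset.sum_add_distrib, Finset.sum_sub_distrib, Finset.sum_neg_distrib]
    rw [← Finset.smul_sum,
      Finset.sum_comm (s := Finset.range m) (t := Finset.range N)
        (f := fun j k => (k:ℝ) • gmul k (dxi (k - 1) (dxi j (dg (m - 1 - j) a)))),
      Finset.sum_comm (s := Finset.range m) (t := Finset.range N)
        (f := fun j k => ximul k (dxi j (dg k (dg (m - 1 - j) a))))]
  rw [H1, H2, H3, H4, H5, H6, H7, HF_lemma m N a, Hff_lemma m a]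
  module

end SVtest

theorem fermionic_constraints_imply_bosonic (T₂ v : ℝ) (Z : SEA)
    (hG : ∀ m : ℕ, Gop T₂ v m Z = 0) : ∀ m : ℕ, Lop T₂ v m Z = 0 := by
  intro m
  have h2 : (2:ℝ) • Lop T₂ v m Z = 0 := by
    rw [← SVtest.anticomm T₂ v m Z, hG m, hG 0, SVtest.Gop_zero, SVtest.Gop_zero, add_zero]
  exact (smul_eq_zero.mp h2).resolve_left (by norm_num)
end

section
/- The Virasoro constraints imply the loop equation of the formal Hermitian one-matrix model (eq. (2.29), derived in Appendix B.1): Let t and N be nonzero reals and T₂ real, and let F ∈ ℝ[[g₀,g₁,…]] satisfy, for every integer n ≥ −1, the Virasoro free-energy equation T₂ ∂F/∂g_{n+2} + Σ_{k≥1} k g_k ∂F/∂g_{k+n} + (t/N)² Σ_{j=0}^{n} ( ∂²F/(∂g_j∂g_{n−j}) + (∂F/∂g_j)(∂F/∂g_{n−j}) ) = 0 (the sum over j being empty for n = −1). Define the following formal series in an auxiliary variable x with coefficients in ℝ[[g₀,g₁,…]], indexed by m ∈ ℤ: W₁(x) := −(t/N) Σ_{k≥0} x^{−k−1} ∂F/∂g_k;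 W₂(x,x) := (t/N)² Σ_{k,l≥0} x^{−k−l−2} ∂²F/(∂g_k∂g_l); V′(x) := T₂ x + Σ_{k≥1} k g_k x^{k−1}; P₁(x) := −T₂ ∂F/∂g₀ − Σ_{m≥0} x^m Σ_{k≥0} (m+k+2) g_{m+k+2} ∂F/∂g_k. Then the loop equation holds: −(N/t) V′(x) W₁(x) + P₁(x) + W₁(x)² + W₂(x,x) = 0, meaning that for every integer m the total coefficient of x^m on the left-hand side (a coefficientwise-convergent sum: for each fixed monomial in the g's only finitely many terms contribute) vanishes in ℝ[[g₀,g₁,…]]. -/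
/-!
Statement 8: the Virasoro constraints imply the loop equation of the formal Hermitian
one-matrix model (eq. (2.29), derived in Appendix B.1 of the paper).

We work in `ℝ[[g₀,g₁,…]] = MvPowerSeries ℕ ℝ`.

* `pd i F` is the coefficientwise formal partial derivative `∂F/∂g_i`.
* `cSum u` is the coefficientwise sum `Σ_{k≥0} u k` of a family of power series (via
  `finsum`; for the families appearing below, on each fixed monomial only finitely many
  summands have a nonzero coefficient, so the coefficientwise `finsum` is the honest sum).
* The Virasoro free-energy equations, indexed by the integers `n ≥ -1`, are reindexed by
  `m : ℕ` via `n = m - 1` (a bijection onto `{n : ℤ | n ≥ -1}`): `virasoroFE T₂ t N F m`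
  says `T₂ ∂F/∂g_{n+2} + Σ_{k≥1} k g_k ∂F/∂g_{k+n}`
  `+ (t/N)² Σ_{j=0}^{n} (∂²F/(∂g_j∂g_{n-j}) + (∂F/∂g_j)(∂F/∂g_{n-j})) = 0` with `n = m-1`
  (the `k = 0` summand carries coefficient `0`, and `Σ_{j=0}^{n}` is `Finset.range m`).
* The formal series `W₁(x) = -(t/N) Σ_{k≥0} x^{-k-1} ∂F/∂g_k`,
  `W₂(x,x) = (t/N)² Σ_{k,l≥0} x^{-k-l-2} ∂²F/(∂g_k∂g_l)`,
  `V'(x) = T₂ x + Σ_{k≥1} k g_k x^{k-1}` and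
  `P₁(x) = -T₂ ∂F/∂g₀ - Σ_{m≥0} x^m Σ_{k≥0} (m+k+2) g_{m+k+2} ∂F/∂g_k`
  are encoded by their coefficients at each power `x^μ`, `μ : ℤ`: `W1coef`, `W2coef`,
  `VpW1coef` (the coefficient of `V'(x)·W₁(x)`), `W1sqcoef` (of `W₁(x)²`), `P1coef`.
* The conclusion is the loop equation
  `-(N/t) V'(x) W₁(x) + P₁(x) + W₁(x)² + W₂(x,x) = 0`,
  i.e. for every `μ : ℤ` the total coefficient of `x^μ` vanishes.
-/

open MvPowerSeries

/-- Coefficientwise formal partial derivative `∂F/∂g_i` of a power series. -/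
noncomputable def pd (i : ℕ) (F : MvPowerSeries ℕ ℝ) : MvPowerSeries ℕ ℝ :=
  fun d => ((d i : ℝ) + 1) * coeff (d + Finsupp.single i 1) F

/-- Coefficientwise sum of a family of power series. -/
noncomputable def cSum (u : ℕ → MvPowerSeries ℕ ℝ) : MvPowerSeries ℕ ℝ :=
  fun d => ∑ᶠ k, coeff d (u k)

/-- The Virasoro free-energy equation `L_{m-1}`-constraint for `Z = e^F` (eq. (2.26)). -/
def virasoroFE (T₂ t N : ℝ) (F : MvPowerSeries ℕ ℝ) (m : ℕ) : Prop :=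
  T₂ • pd (m + 1) F
    + cSum (fun k => (k : ℝ) • (X k * pd (m + k - 1) F))
    + ((t / N) ^ 2) •
        ∑ j ∈ Finset.range m, (pd j (pd (m - 1 - j) F) + pd j F * pd (m - 1 - j) F) = 0

section LoopData

variable (T₂ t N : ℝ) (F : MvPowerSeries ℕ ℝ)

/-- Coefficient of `x^μ` in `W₁(x) = -(t/N) Σ_{k≥0} x^{-k-1} ∂F/∂g_k`. -/
noncomputable def W1coef (μ : ℤ) : MvPowerSeries ℕ ℝ :=
  if μ < 0 then (-(t / N)) • pd (-μ - 1).toNat F else 0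

/-- Coefficient of `x^μ` in `W₂(x,x) = (t/N)² Σ_{k,l≥0} x^{-k-l-2} ∂²F/(∂g_k∂g_l)`. -/
noncomputable def W2coef (μ : ℤ) : MvPowerSeries ℕ ℝ :=
  if μ ≤ -2 then
    ((t / N) ^ 2) • ∑ k ∈ Finset.range (-μ - 1).toNat, pd k (pd ((-μ - 2).toNat - k) F)
  else 0

/-- Coefficient of `x^μ` in `V'(x) W₁(x)`, where `V'(x) = T₂ x + Σ_{k≥1} k g_k x^{k-1}`. -/
noncomputable def VpW1coef (μ : ℤ) : MvPowerSeries ℕ ℝ :=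
  T₂ • W1coef t N F (μ - 1) + cSum (fun k => (k : ℝ) • (X k * W1coef t N F (μ - k + 1)))

/-- Coefficient of `x^μ` in `W₁(x)²`. -/
noncomputable def W1sqcoef (μ : ℤ) : MvPowerSeries ℕ ℝ :=
  if μ ≤ -2 then
    ∑ k ∈ Finset.range (-μ - 1).toNat, W1coef t N F (-(k : ℤ) - 1) * W1coef t N F (μ + k + 1)
  else 0

/-- Coefficient of `x^μ` in
`P₁(x) = -T₂ ∂F/∂g₀ - Σ_{m≥0} x^m Σ_{k≥0} (m+k+2) g_{m+k+2} ∂F/∂g_k`. -/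
noncomputable def P1coef (μ : ℤ) : MvPowerSeries ℕ ℝ :=
  if 0 ≤ μ then
    -(if μ = 0 then T₂ • pd 0 F else 0)
      - cSum (fun k => ((μ.toNat + k + 2 : ℕ) : ℝ) • (X (μ.toNat + k + 2) * pd k F))
  else 0

end LoopData

section AuxLemmas

lemma finsum_shift {M : Type*} [AddCommMonoid M] (f : ℕ → M) (c : ℕ)
    (h : ∀ k, k < c → f k = 0) : ∑ᶠ k, f k = ∑ᶠ k, f (k + c) := by
  have hinj : Function.Injective (fun k : ℕ => k + c) := fun a b hab => by simpa using hab
  rw [← finsum_mem_range (f := f) hinj, ← finsum_mem_univ f]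
  apply finsum_mem_inter_support_eq'
  intro x hx
  simp only [Set.mem_univ, true_iff, Set.mem_range]
  rcases le_or_gt c x with hcx | hcx
  · exact ⟨x - c, by omega⟩
  · exact absurd (h x hcx) hx

lemma coeff_cSum (d : ℕ →₀ ℕ) (u : ℕ → MvPowerSeries ℕ ℝ) :
    coeff d (cSum u) = ∑ᶠ k, coeff d (u k) := rfl

lemma smul_cSum (c : ℝ) (u : ℕ → MvPowerSeries ℕ ℝ) :
    c • cSum u = cSum (fun k => c • u k) := by
  apply MvPowerSeries.ext; intro d
  rw [map_smul, coeff_cSum, coeff_cSum, smul_finsum]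
  exact finsum_congr fun k => (map_smul (coeff d) c (u k)).symm

lemma cSum_congr {u v : ℕ → MvPowerSeries ℕ ℝ} (h : ∀ k, u k = v k) : cSum u = cSum v := by
  rw [funext h]

lemma cSum_shift (u : ℕ → MvPowerSeries ℕ ℝ) (c : ℕ) (h : ∀ k, k < c → u k = 0) :
    cSum u = cSum (fun k => u (k + c)) := by
  apply MvPowerSeries.ext; intro d
  rw [coeff_cSum, coeff_cSum]
  exact finsum_shift (fun k => coeff d (u k)) c (fun k hk => by simp [h k hk])

end AuxLemmas

/-- The Virasoro constraints imply the loop equation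
`-(N/t) V'(x) W₁(x) + P₁(x) + W₁(x)² + W₂(x,x) = 0`, coefficientwise in `x`. -/
theorem virasoro_implies_loop_equation (T₂ t N : ℝ) (ht : t ≠ 0) (hN : N ≠ 0)
    (F : MvPowerSeries ℕ ℝ) (hF : ∀ m : ℕ, virasoroFE T₂ t N F m) :
    ∀ μ : ℤ,
      (-(N / t)) • VpW1coef T₂ t N F μ + P1coef T₂ F μ
        + W1sqcoef t N F μ + W2coef t N F μ = 0 := by
  intro μ
  by_cases h0 : 0 ≤ μ
  · -- nonnegative powers of x
    have hW2 : W2coef t N F μ = 0 := by simp only [W2coef]; rw [if_neg (by omega)]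
    have hW1sq : W1sqcoef t N F μ = 0 := by simp only [W1sqcoef]; rw [if_neg (by omega)]
    have hterm1 : -(N / t) • (T₂ • W1coef t N F (μ - 1))
        = (if μ = 0 then T₂ • pd 0 F else 0) := by
      by_cases hμ0 : μ = 0
      · rw [if_pos hμ0]
        simp only [W1coef]
        rw [if_pos (by omega), show (-(μ - 1) - 1).toNat = 0 from by omega,
          smul_smul, smul_smul]
        congr 1
        field_simp
      · rw [if_neg hμ0]
        simp only [W1coef]
        rw [if_neg (by omega)]
        simp
    have hterm2 : -(N / t) • cSum (fun k => (k : ℝ) • (X k * W1coef t N F (μ - k + 1)))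
        = cSum (fun k => ((μ.toNat + k + 2 : ℕ) : ℝ) • (X (μ.toNat + k + 2) * pd k F)) := by
      rw [smul_cSum]
      have key : ∀ k : ℕ, -(N / t) • ((k : ℝ) • (X k * W1coef t N F (μ - k + 1)))
          = (fun k => if μ.toNat + 2 ≤ k then
              (k : ℝ) • (X k * pd (k - (μ.toNat + 2)) F) else 0) k := by
        intro k
        show _ = if μ.toNat + 2 ≤ k then (k : ℝ) • (X k * pd (k - (μ.toNat + 2)) F) else 0
        by_cases hk : μ.toNat + 2 ≤ k
        · rw [if_pos hk]
          simp only [W1coef]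
          rw [if_pos (by omega), show (-(μ - k + 1) - 1).toNat = k - (μ.toNat + 2) from by omega,
            mul_smul_comm, smul_smul, smul_smul]
          congr 1
          field_simp
        · rw [if_neg hk]
          simp only [W1coef]
          rw [if_neg (by omega)]
          simp
      rw [cSum_congr key, cSum_shift _ (μ.toNat + 2) (fun k hk => by rw [if_neg (by omega)])]
      apply cSum_congr
      intro j
      rw [if_pos (by omega)]
      simp only [show j + (μ.toNat + 2) = μ.toNat + j + 2 from by omega,
        show μ.toNat + j + 2 - (μ.toNat + 2) = j from by omega]
    simp only [VpW1coef, P1coef]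
    rw [smul_add, hterm1, hterm2, hW1sq, hW2, if_pos h0]
    abel
  · -- negative powers of x
    push_neg at h0
    set m := (-μ - 1).toNat with hm
    have hμ : μ = -(m : ℤ) - 1 := by omega
    have hP1 : P1coef T₂ F μ = 0 := by simp only [P1coef]; rw [if_neg (by omega)]
    have hterm1 : -(N / t) • (T₂ • W1coef t N F (μ - 1)) = T₂ • pd (m + 1) F := by
      simp only [W1coef]
      rw [if_pos (by omega), show (-(μ - 1) - 1).toNat = m + 1 from by omega,
        smul_smul, smul_smul]
      congr 1
      field_simp
    have hterm2 : -(N / t) • cSum (fun k => (k : ℝ) • (X k * W1coef t N F (μ - k + 1)))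
        = cSum (fun k => (k : ℝ) • (X k * pd (m + k - 1) F)) := by
      rw [smul_cSum]
      apply cSum_congr
      intro k
      rcases Nat.eq_zero_or_pos k with hk | hk
      · subst hk; simp
      · simp only [W1coef]
        rw [if_pos (by omega), show (-(μ - k + 1) - 1).toNat = m + k - 1 from by omega,
          mul_smul_comm, smul_smul, smul_smul]
        congr 1
        field_simp
    have hterm3 : W1sqcoef t N F μ + W2coef t N F μ
        = ((t / N) ^ 2) • ∑ j ∈ Finset.range m,
            (pd j (pd (m - 1 - j) F) + pd j F * pd (m - 1 - j) F) := by
      rcases Nat.eq_zero_or_pos m with hm0 | hm0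
      · simp only [W1sqcoef, W2coef]
        rw [if_neg (by omega), if_neg (by omega), hm0]
        simp
      · simp only [W1sqcoef, W2coef]
        rw [if_pos (by omega), if_pos (by omega), ← hm,
          show (-μ - 2).toNat = m - 1 from by omega]
        have hsq : ∑ k ∈ Finset.range m, W1coef t N F (-(k : ℤ) - 1) * W1coef t N F (μ + k + 1)
            = ((t / N) ^ 2) • ∑ k ∈ Finset.range m, pd k F * pd (m - 1 - k) F := by
          rw [Finset.smul_sum]
          apply Finset.sum_congr rfl
          intro k hk
          have hkm : k < m := Finset.mem_range.mp hk
          simp only [W1coef]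
          rw [if_pos (by omega), if_pos (by omega),
            show (-(-(k : ℤ) - 1) - 1).toNat = k from by omega,
            show (-(μ + k + 1) - 1).toNat = m - 1 - k from by omega,
            smul_mul_smul_comm]
          congr 1
          ring
        rw [hsq, Finset.sum_add_distrib, smul_add]
        abel
    simp only [VpW1coef]
    rw [smul_add, hterm1, hterm2, hP1, add_zero, add_assoc, hterm3]
    exact hF m
end
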